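/- arXiv:2511.03495 — 6 statements merged into one kernel-verified Lean document; each statement's English description precedes it below -/
import Mathlib

section
/- Let I be a finite index set, C a symmetric positive semidefinite matrix indexed by I, X ⊆ I a subset, and k > 0 a real number such that k · ‖C‖ ≤ 1, where ‖C‖ is the operator norm of C on Euclidean ℝ^I (its largest eigenvalue). Then for every φ ∈ ℝ^I, ∫ exp( −(k/2) · ∑_{x∈X} (φ_x + ζ_x)² ) dμ_C(ζ) ≤ exp( −(k/4) · ∑_{x∈X} φ_x² ). -/
open MeasureTheory

section Aux
open ProbabilityTheory Real Matrix

namespace GaussContractionAux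

/-! ### One-dimensional Gaussian mgf -/

lemma gaussianPDFReal_mul_exp (c x : ℝ) :
    gaussianPDFReal 0 1 x * Real.exp (c * x)
      = Real.exp (c ^ 2 / 2) * gaussianPDFReal c 1 x := by
  simp only [gaussianPDFReal]
  push_cast
  rw [mul_assoc, ← Real.exp_add,
    show -(x - 0) ^ 2 / (2 * 1) + c * x = c ^ 2 / 2 + -(x - c) ^ 2 / (2 * 1) by ring,
    Real.exp_add]
  ring

lemma gaussianReal_withDensity :
    gaussianReal 0 1
      = MeasureTheory.volume.withDensity
        (fun x => ((Real.toNNReal (gaussianPDFReal 0 1 x) : NNReal) : ENNReal)) := by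
  rw [gaussianReal_of_var_ne_zero 0 one_ne_zero]
  rfl

lemma meas_toNNReal_pdf : Measurable (fun x => (gaussianPDFReal 0 1 x).toNNReal) :=
  (measurable_gaussianPDFReal 0 1).real_toNNReal

lemma pdf_smul_eq (c : ℝ) : (fun x => (gaussianPDFReal 0 1 x).toNNReal • Real.exp (c * x))
      = fun x => Real.exp (c ^ 2 / 2) * gaussianPDFReal c 1 x := by
  ext x
  rw [NNReal.smul_def, smul_eq_mul, Real.coe_toNNReal _ (gaussianPDFReal_nonneg 0 1 x),
    gaussianPDFReal_mul_exp]

lemma gaussian_mgf_integrable (c : ℝ) :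
    Integrable (fun x => Real.exp (c * x)) (gaussianReal 0 1) := by
  rw [gaussianReal_withDensity, integrable_withDensity_iff_integrable_smul meas_toNNReal_pdf]
  rw [show (fun x => (gaussianPDFReal 0 1 x).toNNReal • Real.exp (c * x))
      = fun x => Real.exp (c ^ 2 / 2) * gaussianPDFReal c 1 x from pdf_smul_eq c]
  exact (integrable_gaussianPDFReal c 1).const_mul _

lemma gaussian_mgf_eq (c : ℝ) :
    ∫ x, Real.exp (c * x) ∂(gaussianReal 0 1) = Real.exp (c ^ 2 / 2) := by
  rw [gaussianReal_withDensity, integral_withDensity_eq_integral_smul meas_toNNReal_pdf]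
  rw [show (fun x => (gaussianPDFReal 0 1 x).toNNReal • Real.exp (c * x))
      = fun x => Real.exp (c ^ 2 / 2) * gaussianPDFReal c 1 x from pdf_smul_eq c]
  rw [integral_const_mul, integral_gaussianPDFReal_eq_one c one_ne_zero, mul_one]

/-! ### Type synonym carrying the Gaussian as its volume measure -/

def GaussR : Type := ℝ

instance : MeasurableSpace GaussR := inferInstanceAs (MeasurableSpace ℝ)

noncomputable instance : MeasureSpace GaussR := ⟨gaussianReal 0 1⟩

instance : IsProbabilityMeasure (volume : Measure GaussR) :=
  inferInstanceAs (IsProbabilityMeasure (gaussianReal 0 1))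

/-- Identity coercion. -/
def GaussR.toR : GaussR → ℝ := fun t => t

/-! ### Core integral bound -/

lemma core_integral_le {I : Type*} [Fintype I]
    (f : (I → ℝ) → ℝ) (hmeas : Measurable f) (hf0 : ∀ η, f η ≤ 0)
    (c₀ : ℝ) (v : I → ℝ) (hb : ∀ η, f η ≤ c₀ + ∑ i, v i * η i) :
    ∫ η, Real.exp (f η) ∂(Measure.pi fun _ : I => gaussianReal 0 1)
      ≤ Real.exp (c₀ + (∑ i, v i ^ 2) / 2) := by
  have int_one : ∀ i : I, Integrable (fun t : ℝ => Real.exp (v i * t)) (gaussianReal 0 1) :=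
    fun i => gaussian_mgf_integrable (v i)
  have hint2 : Integrable (fun η : I → ℝ => Real.exp c₀ * ∏ i, Real.exp (v i * η i))
      (Measure.pi fun _ : I => gaussianReal 0 1) := by
    have h := (Integrable.fintype_prod
      (f := fun (i : I) (t : ℝ) => Real.exp (v i * t)) (μ := fun _ => gaussianReal 0 1)
      (fun i => int_one i)).const_mul (Real.exp c₀)
    exact h
  have hint1 : Integrable (fun η : I → ℝ => Real.exp (f η))
      (Measure.pi fun _ : I => gaussianReal 0 1) := by
    have : IsProbabilityMeasure (Measure.pi fun _ : I => gaussianReal 0 1) := by infer_instance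
    refine Integrable.mono' (integrable_const 1) hmeas.exp.aestronglyMeasurable
      (ae_of_all _ fun η => ?_)
    rw [Real.norm_eq_abs, abs_of_pos (Real.exp_pos _)]
    exact Real.exp_le_one_iff.2 (hf0 η)
  have hprod : (∫ η : I → ℝ, ∏ i, Real.exp (v i * η i)
        ∂(Measure.pi fun _ : I => gaussianReal 0 1))
      = ∏ i, ∫ t : ℝ, Real.exp (v i * t) ∂(gaussianReal 0 1) := by
    have h := integral_fintype_prod_eq_prod (ι := I)
      (f := fun (i : I) (t : ℝ) => Real.exp (v i * t)) (μ := fun _ => gaussianReal 0 1)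
    exact h
  calc ∫ η, Real.exp (f η) ∂(Measure.pi fun _ : I => gaussianReal 0 1)
      ≤ ∫ η, (Real.exp c₀ * ∏ i, Real.exp (v i * η i))
          ∂(Measure.pi fun _ : I => gaussianReal 0 1) := by
        refine integral_mono hint1 hint2 fun η => ?_
        rw [← Real.exp_sum, ← Real.exp_add]
        exact Real.exp_le_exp.2 (hb η)
    _ = Real.exp c₀ * ∏ i, ∫ t : ℝ, Real.exp (v i * t) ∂(gaussianReal 0 1) := by
        rw [integral_const_mul, hprod]
    _ = Real.exp (c₀ + (∑ i, v i ^ 2) / 2) := by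
        have hmgf : ∀ i : I, ∫ t : ℝ, Real.exp (v i * t) ∂(gaussianReal 0 1)
            = Real.exp (v i ^ 2 / 2) := fun i => gaussian_mgf_eq (v i)
        simp_rw [hmgf]
        rw [← Real.exp_sum, ← Real.exp_add, Finset.sum_div]

/-! ### Matrix / dot-product toolkit -/

variable {I : Type*} [Fintype I] [DecidableEq I]

/-- Coordinate projection onto `X`. -/
def projX (X : Finset I) (ψ : I → ℝ) : I → ℝ := fun i => if i ∈ X then ψ i else 0

/-- `M ψ = sk • P (S ψ)`. -/
noncomputable def opM (X : Finset I) (S : Matrix I I ℝ) (sk : ℝ) (ψ : I → ℝ) : I → ℝ :=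
  sk • projX X (S.mulVec ψ)

/-- `T ψ = sk • S (P ψ)`, the adjoint of `M`. -/
noncomputable def opT (X : Finset I) (S : Matrix I I ℝ) (sk : ℝ) (ψ : I → ℝ) : I → ℝ :=
  sk • S.mulVec (projX X ψ)

lemma projX_dot (X : Finset I) (ψ χ : I → ℝ) :
    ψ ⬝ᵥ projX X χ = projX X ψ ⬝ᵥ χ := by
  simp only [dotProduct, projX]
  refine Finset.sum_congr rfl fun i _ => ?_
  by_cases h : i ∈ X <;> simp [h]

lemma dot_opM (X : Finset I) {S : Matrix I I ℝ} (hS : Sᵀ = S) (sk : ℝ) (ψ χ : I → ℝ) :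
    ψ ⬝ᵥ opM X S sk χ = opT X S sk ψ ⬝ᵥ χ := by
  simp only [opM, opT, dotProduct_smul, smul_dotProduct]
  congr 1
  rw [projX_dot, Matrix.dotProduct_mulVec, ← Matrix.mulVec_transpose, hS]

lemma opT_sub (X : Finset I) (S : Matrix I I ℝ) (sk c : ℝ) (ψ χ : I → ℝ) :
    opT X S sk (ψ - c • χ) = opT X S sk ψ - c • opT X S sk χ := by
  have hP : projX X (ψ - c • χ) = projX X ψ - c • projX X χ := by
    ext i
    simp only [projX, Pi.sub_apply, Pi.smul_apply, smul_eq_mul]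
    by_cases h : i ∈ X <;> simp [h]
  simp only [opT, hP, Matrix.mulVec_sub, Matrix.mulVec_smul, smul_sub, smul_comm c]

lemma opM_add (X : Finset I) (S : Matrix I I ℝ) (sk : ℝ) (ψ χ : I → ℝ) :
    opM X S sk (ψ + χ) = opM X S sk ψ + opM X S sk χ := by
  have hP : ∀ a b : I → ℝ, projX X (a + b) = projX X a + projX X b := by
    intro a b; ext i
    simp only [projX, Pi.add_apply]
    by_cases h : i ∈ X <;> simp [h]
  simp only [opM, Matrix.mulVec_add, hP, smul_add]

lemma opM_smul (X : Finset I) (S : Matrix I I ℝ) (sk c : ℝ) (ψ : I → ℝ) :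
    opM X S sk (c • ψ) = c • opM X S sk ψ := by
  have hP : projX X (c • S.mulVec ψ) = c • projX X (S.mulVec ψ) := by
    ext i
    simp only [projX, Pi.smul_apply, smul_eq_mul]
    by_cases h : i ∈ X <;> simp [h]
  simp only [opM, Matrix.mulVec_smul, hP, smul_comm c]

lemma dot_self_nonneg (ψ : I → ℝ) : 0 ≤ ψ ⬝ᵥ ψ :=
  Finset.sum_nonneg fun i _ => mul_self_nonneg _

lemma projX_dot_self_le (X : Finset I) (ψ : I → ℝ) :
    projX X ψ ⬝ᵥ projX X ψ ≤ ψ ⬝ᵥ ψ := by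
  refine Finset.sum_le_sum fun i _ => ?_
  simp only [projX]
  by_cases h : i ∈ X <;> simp [h, mul_self_nonneg]

lemma dot_mulVec_le_opNorm (C : Matrix I I ℝ) (x : I → ℝ) :
    x ⬝ᵥ C.mulVec x ≤ ‖Matrix.toEuclideanCLM (𝕜 := ℝ) C‖ * (x ⬝ᵥ x) := by
  set A := Matrix.toEuclideanCLM (𝕜 := ℝ) C with hA
  set y : EuclideanSpace ℝ I := (WithLp.equiv 2 (I → ℝ)).symm x with hy
  have h1 : inner ℝ y (A y) = x ⬝ᵥ C.mulVec x := by
    rw [hy, hA]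
    simp [Matrix.toEuclideanCLM_toLp, PiLp.inner_apply, dotProduct, mul_comm]
  have h2 : ‖y‖ ^ 2 = x ⬝ᵥ x := by
    rw [hy, EuclideanSpace.norm_eq, Real.sq_sqrt (by positivity)]
    simp [dotProduct, sq]
  calc x ⬝ᵥ C.mulVec x = inner ℝ y (A y) := h1.symm
    _ ≤ ‖y‖ * ‖A y‖ := real_inner_le_norm _ _
    _ ≤ ‖y‖ * (‖A‖ * ‖y‖) := by
        have := A.le_opNorm y
        nlinarith [norm_nonneg y, norm_nonneg (A y)]
    _ = ‖A‖ * ‖y‖ ^ 2 := by ring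
    _ = ‖A‖ * (x ⬝ᵥ x) := by rw [h2]

end GaussContractionAux

end Aux

open GaussContractionAux Matrix ProbabilityTheory

/-- The centered Gaussian measure on `I → ℝ` with covariance matrix `C`: the pushforward
of the standard Gaussian product measure under the positive semidefinite square root of `C`. -/
noncomputable def gaussianMeasure {I : Type*} [Fintype I] [DecidableEq I]
    {C : Matrix I I ℝ} (hC : C.PosSemidef) : Measure (I → ℝ) :=
  Measure.map (fun ζ => Matrix.mulVec ((hC.1.eigenvectorUnitary : Matrix I I ℝ) * Matrix.diagonal
      ((RCLike.ofReal : ℝ → ℝ) ∘ Real.sqrt ∘ hC.1.eigenvalues) *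
      (star hC.1.eigenvectorUnitary : Matrix I I ℝ)) ζ)
    (Measure.pi fun _ => ProbabilityTheory.gaussianReal 0 1)

/-- Gaussian contraction estimate for the decaying large-field regulator: if
`k‖C‖_op ≤ 1` (operator norm on Euclidean space, i.e. the largest eigenvalue), then
`∫ exp(-(k/2) ∑_{x∈X} (φ_x+ζ_x)²) dμ_C(ζ) ≤ exp(-(k/4) ∑_{x∈X} φ_x²)`. -/
theorem gaussian_exp_quadratic_contraction {I : Type*} [Fintype I] [DecidableEq I]
    (C : Matrix I I ℝ) (hC : C.PosSemidef) (X : Finset I) (k : ℝ) (hk : 0 < k)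
    (hkC : k * ‖Matrix.toEuclideanCLM (𝕜 := ℝ) C‖ ≤ 1) (φ : I → ℝ) :
    ∫ ζ, Real.exp (-(k / 2) * ∑ x ∈ X, (φ x + ζ x) ^ 2) ∂(gaussianMeasure hC) ≤
      Real.exp (-(k / 4) * ∑ x ∈ X, (φ x) ^ 2) := by
  classical
  set S := ((hC.1.eigenvectorUnitary : Matrix I I ℝ) * Matrix.diagonal
      ((RCLike.ofReal : ℝ → ℝ) ∘ Real.sqrt ∘ hC.1.eigenvalues) *
      (star hC.1.eigenvectorUnitary : Matrix I I ℝ)) with hSdef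
  have hSsymm : Sᵀ = S := by
    rw [← Matrix.conjTranspose_eq_transpose_of_trivial]
    rw [hSdef, conjTranspose_mul, conjTranspose_mul, diagonal_conjTranspose,
      ← Matrix.star_eq_conjTranspose, ← Matrix.star_eq_conjTranspose, star_star, mul_assoc]
    congr 3
  have hCsymm : Cᵀ = C := by
    rw [← Matrix.conjTranspose_eq_transpose_of_trivial]
    exact hC.isHermitian
  have hSS : S * S = C := by
    have hU := Unitary.coe_star_mul_self hC.1.eigenvectorUnitary
    have hD : Matrix.diagonal ((RCLike.ofReal : ℝ → ℝ) ∘ Real.sqrt ∘ hC.1.eigenvalues) *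
        Matrix.diagonal ((RCLike.ofReal : ℝ → ℝ) ∘ Real.sqrt ∘ hC.1.eigenvalues)
        = Matrix.diagonal ((RCLike.ofReal : ℝ → ℝ) ∘ hC.1.eigenvalues) := by
      rw [diagonal_mul_diagonal]
      congr 1; ext i
      simp [Real.mul_self_sqrt (hC.eigenvalues_nonneg i)]
    conv_rhs => rw [hC.1.spectral_theorem, Unitary.conjStarAlgAut_apply]
    rw [hSdef]
    simp only [mul_assoc]
    rw [← mul_assoc (star _ : Matrix I I ℝ) (hC.1.eigenvectorUnitary : Matrix I I ℝ), hU, one_mul,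
      ← mul_assoc _ _ (star _ : Matrix I I ℝ), hD]
  set sk := Real.sqrt k with hskdef
  have hsk : sk * sk = k := Real.mul_self_sqrt hk.le
  set b : I → ℝ := fun i => if i ∈ X then sk * φ i else 0 with hbdef
  set Kb : I → ℝ := opM X S sk (opT X S sk b) with hKbdef
  set u : I → ℝ := b - (1/2 : ℝ) • Kb with hudef
  set v : I → ℝ := -(opT X S sk u) with hvdef
  set c₀ : ℝ := -(1/2) * (u ⬝ᵥ u) - (1/2) * (opT X S sk u ⬝ᵥ opT X S sk b) with hc₀def
  -- contraction property of T
  have hcontr : ∀ ψ : I → ℝ, opT X S sk ψ ⬝ᵥ opT X S sk ψ ≤ ψ ⬝ᵥ ψ := by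
    intro ψ
    have e0 : (S.mulVec (projX X ψ)) ⬝ᵥ (S.mulVec (projX X ψ))
        = projX X ψ ⬝ᵥ C.mulVec (projX X ψ) := by
      rw [Matrix.dotProduct_mulVec, ← Matrix.mulVec_transpose, hSsymm,
        Matrix.mulVec_mulVec, hSS, dotProduct_comm, Matrix.dotProduct_mulVec,
        ← Matrix.mulVec_transpose, hCsymm]
    have e1 : opT X S sk ψ ⬝ᵥ opT X S sk ψ
        = k * (projX X ψ ⬝ᵥ C.mulVec (projX X ψ)) := by
      simp only [opT, smul_dotProduct, dotProduct_smul, smul_eq_mul]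
      rw [e0, ← mul_assoc, hsk]
    rw [e1]
    have h2 := dot_mulVec_le_opNorm C (projX X ψ)
    have h3 := projX_dot_self_le X ψ
    have h4 := dot_self_nonneg (projX X ψ)
    nlinarith [hk.le, mul_le_mul_of_nonneg_right hkC h4]
  -- rewrite the integral over the pushforward measure
  have hmeasS : Measurable (fun η : I → ℝ => S.mulVec η) := by
    apply measurable_pi_lambda
    intro i
    exact Finset.measurable_sum _ fun j _ => (measurable_pi_apply j).const_mul _
  have hcont : Continuous (fun ζ : I → ℝ => Real.exp (-(k / 2) * ∑ x ∈ X, (φ x + ζ x) ^ 2)) := by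
    fun_prop
  rw [gaussianMeasure, integral_map hmeasS.aemeasurable hcont.aestronglyMeasurable]
  set f : (I → ℝ) → ℝ := fun η => -(k / 2) * ∑ x ∈ X, (φ x + S.mulVec η x) ^ 2 with hfdef
  have hf0 : ∀ η, f η ≤ 0 := by
    intro η
    have h5 : (0:ℝ) ≤ ∑ x ∈ X, (φ x + S.mulVec η x) ^ 2 :=
      Finset.sum_nonneg fun x _ => sq_nonneg _
    have hk2 : (0:ℝ) ≤ k / 2 := by linarith
    rw [hfdef]
    simp only [neg_mul]
    exact neg_nonpos.2 (mul_nonneg hk2 h5)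
  have hfmeas : Measurable f := by
    rw [hfdef]
    fun_prop
  -- key identity: the quadratic form as a dot product
  have hquad : ∀ η : I → ℝ,
      (b + opM X S sk η) ⬝ᵥ (b + opM X S sk η) = k * ∑ x ∈ X, (φ x + S.mulVec η x) ^ 2 := by
    intro η
    calc (b + opM X S sk η) ⬝ᵥ (b + opM X S sk η)
        = ∑ x : I, (if x ∈ X then k * (φ x + S.mulVec η x) ^ 2 else 0) := by
          refine Finset.sum_congr rfl fun i _ => ?_
          simp only [hbdef, opM, projX, Pi.add_apply, Pi.smul_apply, smul_eq_mul]
          by_cases h : i ∈ X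
          · simp only [h, if_true]
            rw [← hsk]; ring
          · simp [h]
      _ = ∑ x ∈ X, k * (φ x + S.mulVec η x) ^ 2 := by
          rw [Finset.sum_ite_mem, Finset.univ_inter]
      _ = k * ∑ x ∈ X, (φ x + S.mulVec η x) ^ 2 := by rw [Finset.mul_sum]
  -- pointwise bound
  have hpoint : ∀ η : I → ℝ, f η ≤ c₀ + ∑ i, v i * η i := by
    intro η
    have hfeq : f η = -(1/2) * ((b + opM X S sk η) ⬝ᵥ (b + opM X S sk η)) := by
      rw [hfdef]; rw [hquad η]; ring
    have hMw' : opM X S sk ((1/2 : ℝ) • opT X S sk b) = (1/2 : ℝ) • Kb := by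
      rw [opM_smul, hKbdef]
    have hdecomp : b + opM X S sk η
        = u + opM X S sk ((1/2 : ℝ) • opT X S sk b + η) := by
      rw [opM_add, hMw', hudef]
      abel
    set q : I → ℝ := opM X S sk ((1/2 : ℝ) • opT X S sk b + η) with hqdef
    have hexp : (b + opM X S sk η) ⬝ᵥ (b + opM X S sk η)
        = u ⬝ᵥ u + 2 * (u ⬝ᵥ q) + q ⬝ᵥ q := by
      rw [hdecomp]
      simp only [add_dotProduct, dotProduct_add]
      rw [dotProduct_comm q u]
      ring
    have huq : u ⬝ᵥ q = (1/2) * (opT X S sk u ⬝ᵥ opT X S sk b) + opT X S sk u ⬝ᵥ η := by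
      rw [hqdef, dot_opM X hSsymm, dotProduct_add, dotProduct_smul]
      simp
    have hq0 : 0 ≤ q ⬝ᵥ q := dot_self_nonneg q
    have hvη : ∑ i, v i * η i = -(opT X S sk u ⬝ᵥ η) := by
      rw [hvdef, ← neg_dotProduct]
      rfl
    rw [hfeq, hexp, hc₀def, hvη, huq]
    nlinarith [hq0]
  -- apply the core integral bound
  refine le_trans (core_integral_le f hfmeas hf0 c₀ v hpoint) ?_
  rw [Real.exp_le_exp]
  have hvv : ∑ i, v i ^ 2 = opT X S sk u ⬝ᵥ opT X S sk u := by
    rw [hvdef]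
    simp [dotProduct, pow_two]
  -- scalar quantities
  have e1 : b ⬝ᵥ Kb = opT X S sk b ⬝ᵥ opT X S sk b := by
    rw [hKbdef, dot_opM X hSsymm]
  have e1' : Kb ⬝ᵥ b = opT X S sk b ⬝ᵥ opT X S sk b := by
    rw [dotProduct_comm, e1]
  have e2 : opT X S sk Kb ⬝ᵥ opT X S sk b = Kb ⬝ᵥ Kb := by
    rw [← dot_opM X hSsymm, ← hKbdef]
  have e2' : opT X S sk b ⬝ᵥ opT X S sk Kb = Kb ⬝ᵥ Kb := by
    rw [dotProduct_comm, e2]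
  have hTu : opT X S sk u = opT X S sk b - (1/2 : ℝ) • opT X S sk Kb := by
    rw [hudef, opT_sub]
  set t0 := b ⬝ᵥ b with ht0
  set t1 := opT X S sk b ⬝ᵥ opT X S sk b with ht1
  set t2 := Kb ⬝ᵥ Kb with ht2
  set t3 := opT X S sk Kb ⬝ᵥ opT X S sk Kb with ht3
  have huu : u ⬝ᵥ u = t0 - t1 + (1/4) * t2 := by
    rw [hudef]
    simp only [sub_dotProduct, dotProduct_sub, smul_dotProduct,
      dotProduct_smul, smul_eq_mul]
    rw [e1, e1']
    try ring
  have huTb : opT X S sk u ⬝ᵥ opT X S sk b = t1 - (1/2) * t2 := by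
    rw [hTu]
    simp only [sub_dotProduct, smul_dotProduct, smul_eq_mul]
    rw [e2]
    try ring
  have huTu : opT X S sk u ⬝ᵥ opT X S sk u = t1 - t2 + (1/4) * t3 := by
    rw [hTu]
    simp only [sub_dotProduct, dotProduct_sub, smul_dotProduct,
      dotProduct_smul, smul_eq_mul]
    rw [e2, e2']
    try ring
  have hc1 : t1 ≤ t0 := hcontr b
  have hc2 : t3 ≤ t2 := hcontr Kb
  have hpos : 0 ≤ t0 - 2 * t1 + t2 := by
    have h := dot_self_nonneg (b - Kb)
    simp only [sub_dotProduct, dotProduct_sub] at h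
    rw [e1, e1'] at h
    linarith
  have ht0eq : t0 = k * ∑ x ∈ X, (φ x) ^ 2 := by
    rw [ht0]
    calc b ⬝ᵥ b = ∑ x : I, (if x ∈ X then k * (φ x) ^ 2 else 0) := by
          refine Finset.sum_congr rfl fun i _ => ?_
          simp only [hbdef]
          by_cases h : i ∈ X
          · simp only [h, if_true]
            rw [← hsk]; ring
          · simp [h]
      _ = ∑ x ∈ X, k * (φ x) ^ 2 := by rw [Finset.sum_ite_mem, Finset.univ_inter]
      _ = k * ∑ x ∈ X, (φ x) ^ 2 := by rw [Finset.mul_sum]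
  have hgoal : -(k / 4) * ∑ x ∈ X, (φ x) ^ 2 = -(1/4) * t0 := by
    rw [ht0eq]; ring
  rw [hc₀def, hvv, huu, huTb, huTu, hgoal]
  linarith
end

section
/- There exists a constant C > 0, depending only on n, such that for every g > 0, every κ > 0 and every v ∈ ℝⁿ, the Taylor seminorm of the function F(w) = exp(−(g/4)·|w|⁴) (with |w| the Euclidean norm on ℝⁿ) satisfies ‖F‖_{κ,T(v)} ≤ C^{g·κ⁴} · exp(−(g/8)·|v|⁴). In particular the defining series of the seminorm converges. -/
open scoped ENNReal

/-- The Taylor seminorm `‖F‖_{κ,T(v)} = ∑_r (κ^r/r!) sup{|D^r F(v)(u₁,…,u_r)| : ‖u_j‖_∞ ≤ 1}`,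
valued in `ℝ≥0∞`.  Here `Fin n → ℝ` carries the sup norm, so `‖u j‖` is `‖u j‖_∞`. -/
noncomputable def taylorSeminorm {n : ℕ} (κ : ℝ) (F : (Fin n → ℝ) → ℝ) (v : Fin n → ℝ) :
    ℝ≥0∞ :=
  ∑' r : ℕ, ENNReal.ofReal (κ ^ r / r.factorial) *
    ⨆ u ∈ {u : Fin r → Fin n → ℝ | ∀ j, ‖u j‖ ≤ 1},
      ENNReal.ofReal |iteratedFDeriv ℝ r F v u|

open scoped ContDiff

lemma young_aux (a σ : ℝ) :
    a*σ^3 + 1.5*a^2*σ^2 + a^3*σ + 0.25*a^4 ≤ σ^4/8 + 3500*a^4 := by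
  nlinarith [sq_nonneg (σ^2 - 24*a*σ), sq_nonneg (σ^2 - 24*a^2), sq_nonneg (a*σ - 24*a^2),
    sq_nonneg (σ*a), sq_nonneg (σ^2 - a^2), sq_nonneg (σ^2 - 4*a*σ), sq_nonneg (σ^2 - 48*a^2)]


noncomputable def bellSeq (b : ℕ → ℝ) : ℕ → ℝ
  | 0 => 1
  | (r+1) => ∑ i ∈ (Finset.range (r+1)).attach,
      (r.choose i.1 : ℝ) * b (r+1-i.1) * bellSeq b i.1
  decreasing_by exact Finset.mem_range.mp i.2

lemma bellSeq_succ (b : ℕ → ℝ) (r : ℕ) :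
    bellSeq b (r+1) = ∑ i ∈ Finset.range (r+1),
      (r.choose i : ℝ) * b (r+1-i) * bellSeq b i := by
  rw [bellSeq]
  exact Finset.sum_attach (Finset.range (r+1)) (fun i => (r.choose i : ℝ) * b (r+1-i) * bellSeq b i)

lemma bellSeq_nonneg (b : ℕ → ℝ) (hb : ∀ j, 0 ≤ b j) : ∀ r, 0 ≤ bellSeq b r := by
  intro r
  induction r using Nat.strong_induction_on with
  | _ r ih =>
    match r with
    | 0 => norm_num [bellSeq]
    | (r+1) =>
      rw [bellSeq_succ]
      apply Finset.sum_nonneg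
      intro i hi
      have h1 := ih i (Nat.lt_succ_of_le (Nat.lt_succ_iff.mp (Finset.mem_range.mp hi)))
      have h2 := hb (r+1-i)
      positivity

lemma bellSeq_partial_le (b : ℕ → ℝ) (hb0 : ∀ j, 0 ≤ b j) (hb5 : ∀ j, 5 ≤ j → b j = 0)
    {κ : ℝ} (hκ : 0 ≤ κ) (N : ℕ) :
    ∑ r ∈ Finset.range N, bellSeq b r * κ ^ r / r.factorial ≤
      Real.exp (∑ j ∈ Finset.range 4, b (j+1) * κ ^ (j+1) / (j+1).factorial) := by
  set c := bellSeq b with hc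
  have hcpos := bellSeq_nonneg b hb0
  obtain ⟨M, rfl⟩ | rfl : (∃ M, N = M + 1) ∨ N = 0 := by
    rcases N with _ | M
    · exact Or.inr rfl
    · exact Or.inl ⟨M, rfl⟩
  swap
  · simp only [Finset.range_zero, Finset.sum_empty]
    exact (Real.exp_pos _).le
  set S : ℝ → ℝ := fun t => ∑ r ∈ Finset.range (M+1), c r * t^r / r.factorial with hSdef
  set P : ℝ → ℝ := fun t => ∑ j ∈ Finset.range 4, b (j+1) * t^(j+1) / (j+1).factorial with hPdef
  set P' : ℝ → ℝ := fun t => ∑ j ∈ Finset.range 4, b (j+1) * t^j / j.factorial with hP'def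
  set D : ℝ → ℝ := fun t => ∑ r ∈ Finset.range M, c (r+1) * t^r / r.factorial with hDdef
  -- derivative of S
  have hS : ∀ t, HasDerivAt S (D t) t := by
    intro t
    have h1 : HasDerivAt S (∑ r ∈ Finset.range (M+1), c r * ((r : ℝ) * t^(r-1)) / r.factorial) t := by
      apply HasDerivAt.fun_sum
      intro r _
      exact ((hasDerivAt_pow r t).const_mul (c r)).div_const _
    convert h1 using 1
    rw [Finset.sum_range_succ']
    simp only [Nat.cast_zero, zero_mul, mul_zero, zero_div, add_zero, hDdef]
    apply Finset.sum_congr rfl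
    intro i _
    rw [Nat.factorial_succ]
    have : (i.factorial : ℝ) ≠ 0 := by positivity
    push_cast
    field_simp
  -- derivative of P
  have hP : ∀ t, HasDerivAt P (P' t) t := by
    intro t
    have h1 : HasDerivAt P (∑ j ∈ Finset.range 4, b (j+1) * (((j:ℝ)+1) * t^j) / (j+1).factorial) t := by
      apply HasDerivAt.fun_sum
      intro j _
      have := ((hasDerivAt_pow (j+1) t).const_mul (b (j+1))).div_const ((j+1).factorial : ℝ)
      simpa using this
    convert h1 using 1
    apply Finset.sum_congr rfl
    intro j _
    rw [Nat.factorial_succ]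
    have : (j.factorial : ℝ) ≠ 0 := by positivity
    push_cast
    field_simp
  -- key differential inequality
  have hkey : ∀ t : ℝ, 0 ≤ t → D t ≤ P' t * S t := by
    intro t ht
    have hDt : D t = ∑ r ∈ Finset.Ico 0 M, ∑ i ∈ Finset.Ico 0 (r+1),
        (b (r-i+1) * t^(r-i) / (r-i).factorial) * (c i * t^i / i.factorial) := by
      rw [← Finset.range_eq_Ico]
      apply Finset.sum_congr rfl
      intro r _
      rw [hc, bellSeq_succ, ← hc, Finset.sum_mul, Finset.sum_div]
      rw [← Finset.range_eq_Ico]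
      apply Finset.sum_congr rfl
      intro i hi
      have hir : i ≤ r := Nat.lt_succ_iff.mp (Finset.mem_range.mp hi)
      have h1 : r+1-i = r-i+1 := by omega
      have h2 : t^r = t^(r-i) * t^i := by rw [← pow_add]; congr 1; omega
      have h3 : (r.choose i : ℝ) = r.factorial / (i.factorial * (r-i).factorial) :=
        Nat.cast_choose ℝ hir
      have hf1 : (i.factorial : ℝ) ≠ 0 := by positivity
      have hf2 : ((r-i).factorial : ℝ) ≠ 0 := by positivity
      have hf3 : (r.factorial : ℝ) ≠ 0 := by positivity
      rw [h1, h2, h3]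
      field_simp
    rw [hDt, ← Finset.sum_Ico_Ico_comm]
    have hstep : ∀ i, i < M → ∑ r ∈ Finset.Ico i M,
        (b (r-i+1) * t^(r-i) / (r-i).factorial) * (c i * t^i / i.factorial) ≤
        P' t * (c i * t^i / i.factorial) := by
      intro i _
      rw [← Finset.sum_mul]
      have hci : 0 ≤ c i := by rw [hc]; exact hcpos i
      have hti : (0:ℝ) ≤ t^i := by positivity
      apply mul_le_mul_of_nonneg_right _ (by positivity)
      -- ∑ r ∈ Ico i M, b (r-i+1) * t^(r-i)/(r-i)! ≤ P' t
      rw [Finset.sum_Ico_eq_sum_range]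
      simp only [Nat.add_sub_cancel_left, Nat.add_sub_cancel]
      have hG0 : ∀ j, 0 ≤ b (j+1) * t^j / j.factorial := by
        intro j; have := hb0 (j+1); positivity
      rcases le_total (M - i) 4 with hK | hK
      · exact Finset.sum_le_sum_of_subset_of_nonneg (Finset.range_subset_range.mpr hK)
          (fun j _ _ => hG0 j)
      · refine le_of_eq (Finset.sum_subset (Finset.range_subset_range.mpr hK) ?_).symm
        intro j _ hj
        have : 5 ≤ j + 1 := by
          have := Finset.mem_range.not.mp hj; omega
        rw [hb5 _ this]
        ring
    calc ∑ i ∈ Finset.Ico 0 M, ∑ r ∈ Finset.Ico i M,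
          (b (r-i+1) * t^(r-i) / (r-i).factorial) * (c i * t^i / i.factorial)
        ≤ ∑ i ∈ Finset.Ico 0 M, P' t * (c i * t^i / i.factorial) := by
          apply Finset.sum_le_sum
          intro i hi
          exact hstep i (by simpa using (Finset.mem_Ico.mp hi).2)
      _ ≤ ∑ i ∈ Finset.range (M+1), P' t * (c i * t^i / i.factorial) := by
          rw [← Finset.range_eq_Ico]
          apply Finset.sum_le_sum_of_subset_of_nonneg (Finset.range_subset_range.mpr (by omega))
          intro i _ _
          have h1 : 0 ≤ P' t := by
            apply Finset.sum_nonneg; intro j _; have := hb0 (j+1); positivity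
          have h2 : 0 ≤ c i * t^i / i.factorial := by
            have := hcpos i; positivity
          positivity
      _ = P' t * S t := by rw [hSdef, Finset.mul_sum]
  -- monotonicity
  set h : ℝ → ℝ := fun t => S t * Real.exp (-P t) with hhdef
  have hh' : ∀ t, HasDerivAt h (D t * Real.exp (-P t) + S t * (Real.exp (-P t) * -(P' t))) t := by
    intro t
    exact (hS t).mul (((hP t).neg).exp)
  have hmono : AntitoneOn h (Set.Ici (0:ℝ)) := by
    apply antitoneOn_of_deriv_nonpos (convex_Ici 0)
      (fun t _ => (hh' t).continuousAt.continuousWithinAt)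
      (fun t _ => (hh' t).differentiableAt.differentiableWithinAt)
    intro t ht
    rw [interior_Ici] at ht
    rw [(hh' t).deriv]
    have h1 := hkey t (le_of_lt ht)
    have h2 := Real.exp_pos (-P t)
    nlinarith
  have hκmem : (κ : ℝ) ∈ Set.Ici (0:ℝ) := hκ
  have h0mem : (0 : ℝ) ∈ Set.Ici (0:ℝ) := Set.self_mem_Ici
  have hle : h κ ≤ h 0 := hmono h0mem hκmem hκ
  have hS0 : S 0 = 1 := by
    show (∑ r ∈ Finset.range (M+1), c r * (0:ℝ)^r / r.factorial) = 1
    rw [Finset.sum_eq_single 0]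
    · norm_num [hc]; norm_num [bellSeq]
    · intro r _ hr
      rw [zero_pow hr]
      ring
    · intro habs
      exact absurd (Finset.mem_range.mpr (by omega)) habs
  have hP0 : P 0 = 0 := by
    show (∑ j ∈ Finset.range 4, b (j+1) * (0:ℝ)^(j+1) / (j+1).factorial) = 0
    apply Finset.sum_eq_zero
    intro j _
    rw [zero_pow (by omega)]
    ring
  have hh0 : h 0 = 1 := by rw [hhdef]; simp only [hS0, hP0, neg_zero, Real.exp_zero, mul_one]
  rw [hh0] at hle
  have : S κ = h κ * Real.exp (P κ) := by
    rw [hhdef, mul_assoc, ← Real.exp_add]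
    simp
  calc S κ = h κ * Real.exp (P κ) := this
    _ ≤ 1 * Real.exp (P κ) := mul_le_mul_of_nonneg_right hle (Real.exp_pos _).le
    _ = Real.exp (P κ) := one_mul _

section
variable {E₁ F₁ : Type*} [NormedAddCommGroup E₁] [NormedSpace ℝ E₁]
  [NormedAddCommGroup F₁] [NormedSpace ℝ F₁]

lemma natcast_le_infty (k : ℕ) : ((k : ℕ) : WithTop ℕ∞) ≤ ((⊤ : ℕ∞) : WithTop ℕ∞) := by
  exact_mod_cast (le_top : (k:ℕ∞) ≤ ⊤)

lemma clm_iteratedFDeriv_one_le (f : E₁ →L[ℝ] F₁) (x : E₁) :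
    ‖iteratedFDeriv ℝ 1 (⇑f) x‖ ≤ ‖f‖ := by
  rw [← norm_iteratedFDeriv_fderiv]
  have h : fderiv ℝ (⇑f) = fun _ => f := funext fun y => f.fderiv
  rw [h, norm_iteratedFDeriv_zero]

lemma clm_iteratedFDeriv_ge_two (f : E₁ →L[ℝ] F₁) (k : ℕ) (x : E₁) :
    ‖iteratedFDeriv ℝ (k+2) (⇑f) x‖ = 0 := by
  rw [← norm_iteratedFDeriv_fderiv]
  have h : fderiv ℝ (⇑f) = fun _ => f := funext fun y => f.fderiv
  rw [h, iteratedFDeriv_const_of_ne (by omega : k + 1 ≠ 0)]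
  simp

end

section
variable {n : ℕ}

lemma norm_proj_le (i : Fin n) : ‖(ContinuousLinearMap.proj i : (Fin n → ℝ) →L[ℝ] ℝ)‖ ≤ 1 := by
  apply ContinuousLinearMap.opNorm_le_bound _ zero_le_one
  intro x
  rw [one_mul]
  exact norm_le_pi_norm x i

lemma sq_eq_bilin (i : Fin n) : (fun w : Fin n → ℝ => w i ^ 2) =
    (fun w => (ContinuousLinearMap.mul ℝ ℝ)
      ((ContinuousLinearMap.proj i : (Fin n → ℝ) →L[ℝ] ℝ) w)
      ((ContinuousLinearMap.proj i : (Fin n → ℝ) →L[ℝ] ℝ) w)) := by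
  funext w
  simp [sq]

lemma sq_contDiff (i : Fin n) : ContDiff ℝ ((⊤ : ℕ∞) : WithTop ℕ∞) (fun w : Fin n → ℝ => w i ^ 2) := by
  exact ((ContinuousLinearMap.proj i : (Fin n → ℝ) →L[ℝ] ℝ).contDiff).pow 2

-- bound for k-th derivative of coordinate square
lemma sq_deriv_bound (i : Fin n) (k : ℕ) (v : Fin n → ℝ) :
    ‖iteratedFDeriv ℝ k (fun w : Fin n → ℝ => w i ^ 2) v‖ ≤
      ∑ l ∈ Finset.range (k + 1), (k.choose l : ℝ) *
        ‖iteratedFDeriv ℝ l (⇑(ContinuousLinearMap.proj i : (Fin n → ℝ) →L[ℝ] ℝ)) v‖ *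
        ‖iteratedFDeriv ℝ (k-l) (⇑(ContinuousLinearMap.proj i : (Fin n → ℝ) →L[ℝ] ℝ)) v‖ := by
  rw [sq_eq_bilin i]
  exact ContinuousLinearMap.norm_iteratedFDeriv_le_of_bilinear_of_le_one
    (ContinuousLinearMap.mul ℝ ℝ)
    (f := ⇑(ContinuousLinearMap.proj i : (Fin n → ℝ) →L[ℝ] ℝ))
    (g := ⇑(ContinuousLinearMap.proj i : (Fin n → ℝ) →L[ℝ] ℝ))
    (ContinuousLinearMap.contDiff _) (ContinuousLinearMap.contDiff _) v
    (natcast_le_infty k) (ContinuousLinearMap.opNorm_mul_le ℝ ℝ)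

end

section
variable {n : ℕ}

lemma q_deriv_le (k : ℕ) (v : Fin n → ℝ) :
    ‖iteratedFDeriv ℝ k (fun w : Fin n → ℝ => ∑ i, w i ^ 2) v‖ ≤
      ∑ i, ‖iteratedFDeriv ℝ k (fun w : Fin n → ℝ => w i ^ 2) v‖ := by
  have heq : (fun w : Fin n → ℝ => ∑ i, w i ^ 2) =
      (∑ j ∈ Finset.univ, (fun (i : Fin n) (w : Fin n → ℝ) => w i ^ 2) j ·) := rfl
  rw [heq, iteratedFDeriv_sum (fun j _ => (sq_contDiff j).of_le (natcast_le_infty k))]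
  rw [Finset.sum_apply]
  exact norm_sum_le _ _

lemma sq_d0 (i : Fin n) (v : Fin n → ℝ) :
    ‖iteratedFDeriv ℝ 0 (fun w : Fin n → ℝ => w i ^ 2) v‖ = v i ^ 2 := by
  rw [norm_iteratedFDeriv_zero, Real.norm_eq_abs, abs_of_nonneg (sq_nonneg _)]

lemma proj_d0 (i : Fin n) (v : Fin n → ℝ) :
    ‖iteratedFDeriv ℝ 0 (⇑(ContinuousLinearMap.proj i : (Fin n → ℝ) →L[ℝ] ℝ)) v‖ = |v i| := by
  rw [norm_iteratedFDeriv_zero, Real.norm_eq_abs]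
  rfl

lemma proj_d1 (i : Fin n) (v : Fin n → ℝ) :
    ‖iteratedFDeriv ℝ 1 (⇑(ContinuousLinearMap.proj i : (Fin n → ℝ) →L[ℝ] ℝ)) v‖ ≤ 1 :=
  (clm_iteratedFDeriv_one_le _ v).trans (norm_proj_le i)

lemma sq_d1 (i : Fin n) (v : Fin n → ℝ) :
    ‖iteratedFDeriv ℝ 1 (fun w : Fin n → ℝ => w i ^ 2) v‖ ≤ 2 * |v i| := by
  have h := sq_deriv_bound i 1 v
  rw [Finset.sum_range_succ, Finset.sum_range_succ, Finset.sum_range_zero] at h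
  rw [proj_d0] at h
  have h1 := proj_d1 i v
  have h2 : (0:ℝ) ≤ |v i| := abs_nonneg _
  have h3 := norm_nonneg (iteratedFDeriv ℝ 1
    (⇑(ContinuousLinearMap.proj i : (Fin n → ℝ) →L[ℝ] ℝ)) v)
  simp only [Nat.choose_self, Nat.choose_zero_right, Nat.cast_one] at h
  nlinarith [h]

lemma sq_d2 (i : Fin n) (v : Fin n → ℝ) :
    ‖iteratedFDeriv ℝ 2 (fun w : Fin n → ℝ => w i ^ 2) v‖ ≤ 2 := by
  have h := sq_deriv_bound i 2 v
  rw [Finset.sum_range_succ, Finset.sum_range_succ, Finset.sum_range_succ,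
    Finset.sum_range_zero] at h
  have hz : ‖iteratedFDeriv ℝ 2 (⇑(ContinuousLinearMap.proj i : (Fin n → ℝ) →L[ℝ] ℝ)) v‖ = 0 :=
    clm_iteratedFDeriv_ge_two _ 0 v
  rw [proj_d0] at h
  have h1 := proj_d1 i v
  have h2 : (0:ℝ) ≤ |v i| := abs_nonneg _
  have h3 := norm_nonneg (iteratedFDeriv ℝ 1
    (⇑(ContinuousLinearMap.proj i : (Fin n → ℝ) →L[ℝ] ℝ)) v)
  simp only [Nat.choose_self, Nat.choose_zero_right, Nat.choose_one_right, Nat.cast_one,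
    Nat.cast_ofNat, hz] at h
  nlinarith [h]

lemma sq_d3 (i : Fin n) (k : ℕ) (v : Fin n → ℝ) :
    ‖iteratedFDeriv ℝ (k+3) (fun w : Fin n → ℝ => w i ^ 2) v‖ = 0 := by
  refine le_antisymm ?_ (norm_nonneg _)
  have h := sq_deriv_bound i (k+3) v
  have hz : ∀ l ∈ Finset.range (k+3+1), ((k+3).choose l : ℝ) *
      ‖iteratedFDeriv ℝ l (⇑(ContinuousLinearMap.proj i : (Fin n → ℝ) →L[ℝ] ℝ)) v‖ *
      ‖iteratedFDeriv ℝ (k+3-l) (⇑(ContinuousLinearMap.proj i : (Fin n → ℝ) →L[ℝ] ℝ)) v‖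
      = 0 := by
    intro l _
    match l, (by omega : l ≤ 1 ∨ 2 ≤ l) with
    | l, Or.inr hl =>
      obtain ⟨m, rfl⟩ : ∃ m, l = m + 2 := ⟨l - 2, by omega⟩
      rw [clm_iteratedFDeriv_ge_two]
      ring
    | l, Or.inl hl =>
      have : k+3-l = (k+1-l)+2 := by omega
      rw [this, clm_iteratedFDeriv_ge_two]
      ring
  rw [Finset.sum_eq_zero hz] at h
  exact h

end

section
variable {n : ℕ}

lemma q_d0 (v : Fin n → ℝ) :
    ‖iteratedFDeriv ℝ 0 (fun w : Fin n → ℝ => ∑ i, w i ^ 2) v‖ = ∑ i, v i ^ 2 := by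
  rw [norm_iteratedFDeriv_zero, Real.norm_eq_abs,
    abs_of_nonneg (Finset.sum_nonneg fun i _ => sq_nonneg _)]

lemma l1_le (v : Fin n → ℝ) :
    (∑ i, |v i|) ≤ Real.sqrt n * Real.sqrt (∑ i, v i ^ 2) := by
  set s := ∑ i, v i ^ 2 with hs
  have hs0 : 0 ≤ s := Finset.sum_nonneg fun i _ => sq_nonneg _
  have hcs := Finset.sum_mul_sq_le_sq_mul_sq Finset.univ (fun i : Fin n => (1:ℝ))
    (fun i => |v i|)
  simp only [one_pow, one_mul, Finset.sum_const, Finset.card_univ, Fintype.card_fin,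
    nsmul_eq_mul, mul_one, sq_abs] at hcs
  have h1 : (∑ i, |v i|) ^ 2 ≤ (n : ℝ) * s := by
    calc (∑ i, |v i|) ^ 2 ≤ (n:ℝ) * ∑ i, v i ^ 2 := hcs
      _ = (n:ℝ) * s := by rw [hs]
  have h2 : (0:ℝ) ≤ ∑ i, |v i| := Finset.sum_nonneg fun i _ => abs_nonneg _
  have h3 : Real.sqrt n * Real.sqrt s = Real.sqrt ((n:ℝ) * s) :=
    (Real.sqrt_mul (Nat.cast_nonneg n) s).symm
  rw [h3]
  exact Real.le_sqrt_of_sq_le h1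

lemma q_d1 (v : Fin n → ℝ) :
    ‖iteratedFDeriv ℝ 1 (fun w : Fin n → ℝ => ∑ i, w i ^ 2) v‖ ≤
      2 * (Real.sqrt n * Real.sqrt (∑ i, v i ^ 2)) := by
  calc ‖iteratedFDeriv ℝ 1 (fun w : Fin n → ℝ => ∑ i, w i ^ 2) v‖
      ≤ ∑ i, ‖iteratedFDeriv ℝ 1 (fun w : Fin n → ℝ => w i ^ 2) v‖ := q_deriv_le 1 v
    _ ≤ ∑ i, 2 * |v i| := Finset.sum_le_sum fun i _ => sq_d1 i v
    _ = 2 * ∑ i, |v i| := by rw [Finset.mul_sum]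
    _ ≤ 2 * (Real.sqrt n * Real.sqrt (∑ i, v i ^ 2)) := by
        have := l1_le v; linarith

lemma q_d2 (v : Fin n → ℝ) :
    ‖iteratedFDeriv ℝ 2 (fun w : Fin n → ℝ => ∑ i, w i ^ 2) v‖ ≤ 2 * n := by
  calc ‖iteratedFDeriv ℝ 2 (fun w : Fin n → ℝ => ∑ i, w i ^ 2) v‖
      ≤ ∑ i, ‖iteratedFDeriv ℝ 2 (fun w : Fin n → ℝ => w i ^ 2) v‖ := q_deriv_le 2 v
    _ ≤ ∑ i : Fin n, (2:ℝ) := Finset.sum_le_sum fun i _ => sq_d2 i v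
    _ = 2 * n := by simp [Finset.sum_const, mul_comm]

lemma q_d3 (k : ℕ) (v : Fin n → ℝ) :
    ‖iteratedFDeriv ℝ (k+3) (fun w : Fin n → ℝ => ∑ i, w i ^ 2) v‖ = 0 := by
  refine le_antisymm ?_ (norm_nonneg _)
  calc ‖iteratedFDeriv ℝ (k+3) (fun w : Fin n → ℝ => ∑ i, w i ^ 2) v‖
      ≤ ∑ i, ‖iteratedFDeriv ℝ (k+3) (fun w : Fin n → ℝ => w i ^ 2) v‖ := q_deriv_le _ v
    _ = 0 := Finset.sum_eq_zero fun i _ => sq_d3 i k v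

lemma q_contDiff : ContDiff ℝ ((⊤ : ℕ∞) : WithTop ℕ∞) (fun w : Fin n → ℝ => ∑ i, w i ^ 2) := by
  exact ContDiff.sum fun i _ => sq_contDiff i

end

section
variable {n : ℕ}

lemma Q_contDiff : ContDiff ℝ ((⊤ : ℕ∞) : WithTop ℕ∞) (fun w : Fin n → ℝ => (∑ i, w i ^ 2)^2) :=
  q_contDiff.pow 2

lemma Q_deriv_bound (k : ℕ) (v : Fin n → ℝ) :
    ‖iteratedFDeriv ℝ k (fun w : Fin n → ℝ => (∑ i, w i ^ 2)^2) v‖ ≤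
      ∑ l ∈ Finset.range (k + 1), (k.choose l : ℝ) *
        ‖iteratedFDeriv ℝ l (fun w : Fin n → ℝ => ∑ i, w i ^ 2) v‖ *
        ‖iteratedFDeriv ℝ (k-l) (fun w : Fin n → ℝ => ∑ i, w i ^ 2) v‖ := by
  have heq : (fun w : Fin n → ℝ => (∑ i, w i ^ 2)^2) =
      (fun w : Fin n → ℝ => (∑ i, w i ^ 2) * (∑ i, w i ^ 2)) := by
    funext w; ring
  rw [heq]
  exact norm_iteratedFDeriv_mul_le q_contDiff q_contDiff v (natcast_le_infty k)

lemma Q_d1 (v : Fin n → ℝ) :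
    ‖iteratedFDeriv ℝ 1 (fun w : Fin n → ℝ => (∑ i, w i ^ 2)^2) v‖ ≤
      4 * (Real.sqrt n * ((∑ i, v i ^ 2) * Real.sqrt (∑ i, v i ^ 2))) := by
  have h := Q_deriv_bound 1 v
  rw [Finset.sum_range_succ, Finset.sum_range_succ, Finset.sum_range_zero, q_d0] at h
  have h1 := q_d1 v
  have h2 := norm_nonneg (iteratedFDeriv ℝ 1 (fun w : Fin n → ℝ => ∑ i, w i ^ 2) v)
  have hs0 : (0:ℝ) ≤ ∑ i, v i ^ 2 := Finset.sum_nonneg fun i _ => sq_nonneg _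
  simp only [Nat.choose_self, Nat.choose_zero_right, Nat.cast_one] at h
  nlinarith [h]

lemma Q_d2 (v : Fin n → ℝ) :
    ‖iteratedFDeriv ℝ 2 (fun w : Fin n → ℝ => (∑ i, w i ^ 2)^2) v‖ ≤
      12 * ((n : ℝ) * (∑ i, v i ^ 2)) := by
  have h := Q_deriv_bound 2 v
  rw [Finset.sum_range_succ, Finset.sum_range_succ, Finset.sum_range_succ,
    Finset.sum_range_zero, q_d0] at h
  have h1 := q_d1 v
  have h2 := q_d2 v
  have h3 := norm_nonneg (iteratedFDeriv ℝ 1 (fun w : Fin n → ℝ => ∑ i, w i ^ 2) v)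
  have h4 := norm_nonneg (iteratedFDeriv ℝ 2 (fun w : Fin n → ℝ => ∑ i, w i ^ 2) v)
  have hs0 : (0:ℝ) ≤ ∑ i, v i ^ 2 := Finset.sum_nonneg fun i _ => sq_nonneg _
  have hm2 : Real.sqrt n ^ 2 = (n:ℝ) := Real.sq_sqrt (Nat.cast_nonneg n)
  have hσ2 : Real.sqrt (∑ i, v i ^ 2) ^ 2 = ∑ i, v i ^ 2 := Real.sq_sqrt hs0
  have hm0 : (0:ℝ) ≤ Real.sqrt n := Real.sqrt_nonneg _
  have hσ0 : (0:ℝ) ≤ Real.sqrt (∑ i, v i ^ 2) := Real.sqrt_nonneg _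
  simp only [Nat.choose_self, Nat.choose_zero_right, Nat.choose_one_right,
    Nat.cast_one, Nat.cast_ofNat] at h
  nlinarith [h, sq_nonneg (‖iteratedFDeriv ℝ 1 (fun w : Fin n → ℝ => ∑ i, w i ^ 2) v‖
    - 2 * (Real.sqrt n * Real.sqrt (∑ i, v i ^ 2)))]

lemma Q_d3 (v : Fin n → ℝ) :
    ‖iteratedFDeriv ℝ 3 (fun w : Fin n → ℝ => (∑ i, w i ^ 2)^2) v‖ ≤
      24 * ((n:ℝ) * (Real.sqrt n * Real.sqrt (∑ i, v i ^ 2))) := by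
  have h := Q_deriv_bound 3 v
  rw [Finset.sum_range_succ, Finset.sum_range_succ, Finset.sum_range_succ,
    Finset.sum_range_succ, Finset.sum_range_zero, q_d0] at h
  have hz : ‖iteratedFDeriv ℝ 3 (fun w : Fin n → ℝ => ∑ i, w i ^ 2) v‖ = 0 := q_d3 0 v
  rw [hz] at h
  have h1 := q_d1 v
  have h2 := q_d2 v
  have h3 := norm_nonneg (iteratedFDeriv ℝ 1 (fun w : Fin n → ℝ => ∑ i, w i ^ 2) v)
  have h4 := norm_nonneg (iteratedFDeriv ℝ 2 (fun w : Fin n → ℝ => ∑ i, w i ^ 2) v)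
  have hs0 : (0:ℝ) ≤ ∑ i, v i ^ 2 := Finset.sum_nonneg fun i _ => sq_nonneg _
  have hm0 : (0:ℝ) ≤ Real.sqrt n := Real.sqrt_nonneg _
  have hσ0 : (0:ℝ) ≤ Real.sqrt (∑ i, v i ^ 2) := Real.sqrt_nonneg _
  have hn0 : (0:ℝ) ≤ (n:ℝ) := Nat.cast_nonneg n
  norm_num [Nat.choose] at h
  have e1 : ‖iteratedFDeriv ℝ (3-1) (fun w : Fin n → ℝ => ∑ i, w i ^ 2) v‖ =
      ‖iteratedFDeriv ℝ 2 (fun w : Fin n → ℝ => ∑ i, w i ^ 2) v‖ := rfl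
  have e2 : ‖iteratedFDeriv ℝ (3-2) (fun w : Fin n → ℝ => ∑ i, w i ^ 2) v‖ =
      ‖iteratedFDeriv ℝ 1 (fun w : Fin n → ℝ => ∑ i, w i ^ 2) v‖ := rfl
  rw [e1, e2, ← norm_iteratedFDeriv_one] at h
  nlinarith [h, mul_le_mul h1 h2 h4 (by positivity : (0:ℝ) ≤ 2 * (Real.sqrt n * Real.sqrt (∑ i, v i ^ 2))),
    mul_le_mul h2 h1 h3 (by positivity : (0:ℝ) ≤ 2 * (n:ℝ))]

lemma Q_d4 (v : Fin n → ℝ) :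
    ‖iteratedFDeriv ℝ 4 (fun w : Fin n → ℝ => (∑ i, w i ^ 2)^2) v‖ ≤ 24 * (n:ℝ)^2 := by
  have h := Q_deriv_bound 4 v
  rw [Finset.sum_range_succ, Finset.sum_range_succ, Finset.sum_range_succ,
    Finset.sum_range_succ, Finset.sum_range_succ, Finset.sum_range_zero, q_d0] at h
  have hz3 : ‖iteratedFDeriv ℝ 3 (fun w : Fin n → ℝ => ∑ i, w i ^ 2) v‖ = 0 := q_d3 0 v
  have hz4 : ‖iteratedFDeriv ℝ 4 (fun w : Fin n → ℝ => ∑ i, w i ^ 2) v‖ = 0 := q_d3 1 v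
  rw [hz3, hz4] at h
  norm_num [Nat.choose] at h
  have h2 := q_d2 v
  have h4 := norm_nonneg (iteratedFDeriv ℝ 2 (fun w : Fin n → ℝ => ∑ i, w i ^ 2) v)
  have hs0 : (0:ℝ) ≤ ∑ i, v i ^ 2 := Finset.sum_nonneg fun i _ => sq_nonneg _
  have hn0 : (0:ℝ) ≤ (n:ℝ) := Nat.cast_nonneg n
  nlinarith [h, sq_nonneg (‖iteratedFDeriv ℝ 2 (fun w : Fin n → ℝ => ∑ i, w i ^ 2) v‖ - 2*(n:ℝ))]

lemma Q_d5 (k : ℕ) (v : Fin n → ℝ) :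
    ‖iteratedFDeriv ℝ (k+5) (fun w : Fin n → ℝ => (∑ i, w i ^ 2)^2) v‖ = 0 := by
  refine le_antisymm ?_ (norm_nonneg _)
  have h := Q_deriv_bound (k+5) v
  have hz : ∀ l ∈ Finset.range (k+5+1), ((k+5).choose l : ℝ) *
      ‖iteratedFDeriv ℝ l (fun w : Fin n → ℝ => ∑ i, w i ^ 2) v‖ *
      ‖iteratedFDeriv ℝ (k+5-l) (fun w : Fin n → ℝ => ∑ i, w i ^ 2) v‖ = 0 := by
    intro l _
    rcases (by omega : l ≤ 2 ∨ 3 ≤ l) with hl | hl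
    · have : k+5-l = (k+2-l)+3 := by omega
      rw [this, q_d3]
      ring
    · obtain ⟨m, rfl⟩ : ∃ m, l = m + 3 := ⟨l - 3, by omega⟩
      rw [q_d3]
      ring
  rw [Finset.sum_eq_zero hz] at h
  exact h

end

section
variable {n : ℕ}

lemma phi_contDiff (g : ℝ) : ContDiff ℝ ((⊤ : ℕ∞) : WithTop ℕ∞) (fun w : Fin n → ℝ => -(g/4) * (∑ i, w i ^ 2)^2) :=
  ContDiff.mul contDiff_const Q_contDiff

lemma phi_deriv_norm (g : ℝ) (k : ℕ) (v : Fin n → ℝ) :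
    ‖iteratedFDeriv ℝ k (fun w : Fin n → ℝ => -(g/4) * (∑ i, w i ^ 2)^2) v‖ =
      |g|/4 * ‖iteratedFDeriv ℝ k (fun w : Fin n → ℝ => (∑ i, w i ^ 2)^2) v‖ := by
  have heq : (fun w : Fin n → ℝ => -(g/4) * (∑ i, w i ^ 2)^2) =
      (fun w : Fin n → ℝ => (-(g/4)) • ((∑ i, w i ^ 2)^2)) := by
    funext w; simp [smul_eq_mul]
  rw [heq, iteratedFDeriv_const_smul_apply' (Q_contDiff.of_le (natcast_le_infty k)).contDiffAt]
  have : ‖(-(g/4) : ℝ)‖ = |g|/4 := by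
    rw [Real.norm_eq_abs, abs_neg, abs_div]; norm_num
  rw [← this]
  exact norm_smul (-(g/4) : ℝ) (iteratedFDeriv ℝ k (fun w : Fin n → ℝ => (∑ i, w i ^ 2)^2) v)

lemma F_contDiff (g : ℝ) :
    ContDiff ℝ ((⊤ : ℕ∞) : WithTop ℕ∞) (fun w : Fin n → ℝ => Real.exp (-(g/4) * (∑ i, w i ^ 2)^2)) :=
  (phi_contDiff g).exp

lemma F_fderiv (g : ℝ) :
    fderiv ℝ (fun w : Fin n → ℝ => Real.exp (-(g/4) * (∑ i, w i ^ 2)^2)) =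
      fun x => Real.exp (-(g/4) * (∑ i, x i ^ 2)^2) •
        fderiv ℝ (fun w : Fin n → ℝ => -(g/4) * (∑ i, w i ^ 2)^2) x := by
  funext x
  exact (((phi_contDiff (n := n) g).differentiable (by simp)).differentiableAt.hasFDerivAt.exp).fderiv

lemma F_deriv_rec {n : ℕ} (g : ℝ) (v : Fin n → ℝ) (b : ℕ → ℝ) (hb0 : ∀ j, 0 ≤ b j)
    (hb : ∀ j : ℕ, ‖iteratedFDeriv ℝ (j+1)
        (fun w : Fin n → ℝ => -(g/4) * (∑ i, w i ^ 2)^2) v‖ ≤ b (j+1)) :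
    ∀ r, ‖iteratedFDeriv ℝ r
        (fun w : Fin n → ℝ => Real.exp (-(g/4) * (∑ i, w i ^ 2)^2)) v‖ ≤
      Real.exp (-(g/4) * (∑ i, v i ^ 2)^2) * bellSeq b r := by
  intro r
  induction r using Nat.strong_induction_on with
  | _ r ih =>
    match r with
    | 0 =>
      rw [norm_iteratedFDeriv_zero, Real.norm_eq_abs, abs_of_pos (Real.exp_pos _)]
      simp [bellSeq]
    | (r+1) =>
      have hstep : ‖iteratedFDeriv ℝ (r+1)
          (fun w : Fin n → ℝ => Real.exp (-(g/4) * (∑ i, w i ^ 2)^2)) v‖ =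
          ‖iteratedFDeriv ℝ r (fderiv ℝ
            (fun w : Fin n → ℝ => Real.exp (-(g/4) * (∑ i, w i ^ 2)^2))) v‖ :=
        (norm_iteratedFDeriv_fderiv).symm
      rw [hstep, F_fderiv g]
      have hsmul := norm_iteratedFDeriv_smul_le
        (𝕜 := ℝ)
        (f := fun w : Fin n → ℝ => Real.exp (-(g/4) * (∑ i, w i ^ 2)^2))
        (g := fun x : Fin n → ℝ => fderiv ℝ
          (fun w : Fin n → ℝ => -(g/4) * (∑ i, w i ^ 2)^2) x)
        (F_contDiff g) ((phi_contDiff g).fderiv_right (by norm_num)) v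
        (natcast_le_infty r)
      refine hsmul.trans ?_
      have hterm : ∀ i ∈ Finset.range (r+1), (r.choose i : ℝ) *
          ‖iteratedFDeriv ℝ i
            (fun w : Fin n → ℝ => Real.exp (-(g/4) * (∑ i, w i ^ 2)^2)) v‖ *
          ‖iteratedFDeriv ℝ (r-i) (fun x : Fin n → ℝ => fderiv ℝ
            (fun w : Fin n → ℝ => -(g/4) * (∑ i, w i ^ 2)^2) x) v‖ ≤
          (r.choose i : ℝ) *
            (Real.exp (-(g/4) * (∑ i, v i ^ 2)^2) * bellSeq b i) * b (r+1-i) := by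
        intro i hi
        have hi' : i ≤ r := Nat.lt_succ_iff.mp (Finset.mem_range.mp hi)
        have h1 := ih i (by omega)
        have h2 : ‖iteratedFDeriv ℝ (r-i) (fun x : Fin n → ℝ => fderiv ℝ
            (fun w : Fin n → ℝ => -(g/4) * (∑ i, w i ^ 2)^2) x) v‖ ≤ b (r+1-i) := by
          have e1 : ‖iteratedFDeriv ℝ (r-i) (fun x : Fin n → ℝ => fderiv ℝ
              (fun w : Fin n → ℝ => -(g/4) * (∑ i, w i ^ 2)^2) x) v‖ =
              ‖iteratedFDeriv ℝ (r-i+1)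
                (fun w : Fin n → ℝ => -(g/4) * (∑ i, w i ^ 2)^2) v‖ :=
            norm_iteratedFDeriv_fderiv
          have e2 : r+1-i = (r-i)+1 := by omega
          rw [e1, e2]
          exact hb (r-i)
        have hch : (0:ℝ) ≤ (r.choose i : ℝ) := Nat.cast_nonneg _
        have hbel := bellSeq_nonneg b hb0 i
        have hexp := (Real.exp_pos (-(g/4) * (∑ i, v i ^ 2)^2)).le
        apply mul_le_mul
        · exact mul_le_mul_of_nonneg_left h1 hch
        · exact h2
        · exact norm_nonneg _
        · positivity
      refine (Finset.sum_le_sum hterm).trans ?_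
      rw [bellSeq_succ, Finset.mul_sum]
      apply le_of_eq
      apply Finset.sum_congr rfl
      intro i _
      ring


/-- Quartic large-field stability: there is `C > 0`, depending only on `n`, such that for all
`g, κ > 0` and all `v ∈ ℝⁿ`, the Taylor seminorm of `w ↦ exp(-(g/4)|w|⁴)` satisfies
`‖F‖_{κ,T(v)} ≤ C^{gκ⁴} exp(-(g/8)|v|⁴)`; in particular the defining series converges. -/
theorem quartic_stability (n : ℕ) (hn : 1 ≤ n) :
    ∃ C : ℝ, 0 < C ∧
      ∀ g κ : ℝ, 0 < g → 0 < κ → ∀ v : Fin n → ℝ,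
        taylorSeminorm κ (fun w => Real.exp (-(g / 4) * (∑ i, (w i) ^ 2) ^ 2)) v ≤
          ENNReal.ofReal (C ^ (g * κ ^ 4) * Real.exp (-(g / 8) * (∑ i, (v i) ^ 2) ^ 2)) := by
  refine ⟨Real.exp (3500 * (n:ℝ)^2), Real.exp_pos _, ?_⟩
  intro g κ hg hκ v
  set s : ℝ := ∑ i, v i ^ 2 with hs
  have hs0 : 0 ≤ s := Finset.sum_nonneg fun i _ => sq_nonneg _
  set σ : ℝ := Real.sqrt s with hσdef
  set m : ℝ := Real.sqrt n with hmdef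
  have hσ0 : 0 ≤ σ := Real.sqrt_nonneg _
  have hm0 : 0 ≤ m := Real.sqrt_nonneg _
  have hσ2 : σ^2 = s := Real.sq_sqrt hs0
  have hm2 : m^2 = (n:ℝ) := Real.sq_sqrt (Nat.cast_nonneg n)
  set b : ℕ → ℝ := fun j =>
    if j = 1 then g/4 * (4 * (m * (s * σ)))
    else if j = 2 then g/4 * (12 * ((n:ℝ) * s))
    else if j = 3 then g/4 * (24 * ((n:ℝ) * (m * σ)))
    else if j = 4 then g/4 * (24 * (n:ℝ)^2)
    else 0 with hbdef
  have hb0 : ∀ j, 0 ≤ b j := by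
    intro j
    rw [hbdef]
    dsimp only
    split_ifs <;> positivity
  have hb5 : ∀ j, 5 ≤ j → b j = 0 := by
    intro j hj
    rw [hbdef]
    dsimp only
    split_ifs <;> first | omega | rfl
  have hb : ∀ j : ℕ, ‖iteratedFDeriv ℝ (j+1)
      (fun w : Fin n → ℝ => -(g/4) * (∑ i, w i ^ 2)^2) v‖ ≤ b (j+1) := by
    intro j
    match j with
    | 0 =>
      rw [phi_deriv_norm, abs_of_pos hg]
      have hb1 : b 1 = g/4 * (4 * (m * (s * σ))) := by rw [hbdef]; norm_num
      rw [hb1]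
      exact mul_le_mul_of_nonneg_left (Q_d1 v) (by positivity)
    | 1 =>
      rw [phi_deriv_norm, abs_of_pos hg]
      have hb2 : b 2 = g/4 * (12 * ((n:ℝ) * s)) := by rw [hbdef]; norm_num
      rw [hb2]
      exact mul_le_mul_of_nonneg_left (Q_d2 v) (by positivity)
    | 2 =>
      rw [phi_deriv_norm, abs_of_pos hg]
      have hb3 : b 3 = g/4 * (24 * ((n:ℝ) * (m * σ))) := by rw [hbdef]; norm_num
      rw [hb3]
      exact mul_le_mul_of_nonneg_left (Q_d3 v) (by positivity)
    | 3 =>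
      rw [phi_deriv_norm, abs_of_pos hg]
      have hb4 : b 4 = g/4 * (24 * (n:ℝ)^2) := by rw [hbdef]; norm_num
      rw [hb4]
      exact mul_le_mul_of_nonneg_left (Q_d4 v) (by positivity)
    | (j+4) =>
      have h1 : b (j+4+1) = 0 := hb5 _ (by omega)
      rw [h1, phi_deriv_norm, Q_d5 j v, mul_zero]
  have hrec := F_deriv_rec g v b hb0 hb
  -- reduce sup over directions to operator norm
  have hsup : ∀ r : ℕ,
      (⨆ u ∈ {u : Fin r → Fin n → ℝ | ∀ j, ‖u j‖ ≤ 1},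
        ENNReal.ofReal |iteratedFDeriv ℝ r
          (fun w => Real.exp (-(g / 4) * (∑ i, (w i) ^ 2) ^ 2)) v u|) ≤
      ENNReal.ofReal ‖iteratedFDeriv ℝ r
        (fun w => Real.exp (-(g / 4) * (∑ i, (w i) ^ 2) ^ 2)) v‖ := by
    intro r
    refine iSup_le fun u => iSup_le fun hu => ?_
    apply ENNReal.ofReal_le_ofReal
    rw [← Real.norm_eq_abs]
    calc ‖iteratedFDeriv ℝ r (fun w => Real.exp (-(g / 4) * (∑ i, (w i) ^ 2) ^ 2)) v u‖
        ≤ ‖iteratedFDeriv ℝ r (fun w => Real.exp (-(g / 4) * (∑ i, (w i) ^ 2) ^ 2)) v‖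
          * ∏ j, ‖u j‖ := ContinuousMultilinearMap.le_opNorm _ u
      _ ≤ ‖iteratedFDeriv ℝ r (fun w => Real.exp (-(g / 4) * (∑ i, (w i) ^ 2) ^ 2)) v‖ * 1 :=
          mul_le_mul_of_nonneg_left
            (Finset.prod_le_one (fun j _ => norm_nonneg _) (fun j _ => hu j)) (norm_nonneg _)
      _ = ‖iteratedFDeriv ℝ r (fun w => Real.exp (-(g / 4) * (∑ i, (w i) ^ 2) ^ 2)) v‖ :=
          mul_one _
  -- the final scalar bound on partial sums
  have hfinal : ∀ N : ℕ,
      (∑ r ∈ Finset.range N, κ ^ r / r.factorial * (Real.exp (-(g/4) * s^2) * bellSeq b r)) ≤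
        Real.exp (3500 * (n:ℝ)^2) ^ (g * κ ^ 4) * Real.exp (-(g / 8) * s ^ 2) := by
    intro N
    have h1 : (∑ r ∈ Finset.range N, κ ^ r / r.factorial *
        (Real.exp (-(g/4) * s^2) * bellSeq b r)) =
        Real.exp (-(g/4) * s^2) * ∑ r ∈ Finset.range N, bellSeq b r * κ ^ r / r.factorial := by
      rw [Finset.mul_sum]
      exact Finset.sum_congr rfl fun r _ => by ring
    rw [h1]
    have h2 := bellSeq_partial_le b hb0 hb5 hκ.le N
    have h3 : Real.exp (-(g/4) * s^2) *
        (∑ r ∈ Finset.range N, bellSeq b r * κ ^ r / r.factorial) ≤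
        Real.exp (-(g/4) * s^2) *
          Real.exp (∑ j ∈ Finset.range 4, b (j+1) * κ ^ (j+1) / (j+1).factorial) :=
      mul_le_mul_of_nonneg_left h2 (Real.exp_pos _).le
    refine h3.trans ?_
    rw [← Real.exp_add]
    have h4 : Real.exp (3500 * (n:ℝ)^2) ^ (g * κ ^ 4) =
        Real.exp (3500 * (n:ℝ)^2 * (g * κ ^ 4)) := by
      rw [← Real.exp_mul]
    rw [h4, ← Real.exp_add]
    apply Real.exp_le_exp.mpr
    -- expand the b-sum
    have h5 : (∑ j ∈ Finset.range 4, b (j+1) * κ ^ (j+1) / (j+1).factorial) =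
        g/4 * (4 * (m * (s * σ))) * κ + g/4 * (12 * ((n:ℝ) * s)) * κ^2 / 2
          + g/4 * (24 * ((n:ℝ) * (m * σ))) * κ^3 / 6 + g/4 * (24 * (n:ℝ)^2) * κ^4 / 24 := by
      rw [Finset.sum_range_succ, Finset.sum_range_succ, Finset.sum_range_succ,
        Finset.sum_range_succ, Finset.sum_range_zero, hbdef]
      norm_num [Nat.factorial]
    rw [h5]
    have hY := young_aux (m*κ) σ
    have hY' := mul_le_mul_of_nonneg_left hY hg.le
    rw [show s = σ^2 from hσ2.symm, show ((n:ℝ)) = m^2 from hm2.symm]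
    nlinarith [hY']
  -- assemble in ℝ≥0∞
  calc taylorSeminorm κ (fun w => Real.exp (-(g / 4) * (∑ i, (w i) ^ 2) ^ 2)) v
      = ∑' r : ℕ, ENNReal.ofReal (κ ^ r / r.factorial) *
          ⨆ u ∈ {u : Fin r → Fin n → ℝ | ∀ j, ‖u j‖ ≤ 1},
            ENNReal.ofReal |iteratedFDeriv ℝ r
              (fun w => Real.exp (-(g / 4) * (∑ i, (w i) ^ 2) ^ 2)) v u| := rfl
    _ ≤ ∑' r : ℕ, ENNReal.ofReal (κ ^ r / r.factorial) *
          ENNReal.ofReal (Real.exp (-(g/4) * s^2) * bellSeq b r) := by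
        refine ENNReal.tsum_le_tsum fun r => mul_le_mul_right ?_ _
        exact (hsup r).trans (ENNReal.ofReal_le_ofReal (hrec r))
    _ = ∑' r : ℕ, ENNReal.ofReal (κ ^ r / r.factorial *
          (Real.exp (-(g/4) * s^2) * bellSeq b r)) := by
        refine tsum_congr fun r => ?_
        rw [ENNReal.ofReal_mul (show (0:ℝ) ≤ κ ^ r / r.factorial by positivity)]
    _ ≤ ENNReal.ofReal (Real.exp (3500 * (n:ℝ)^2) ^ (g * κ ^ 4) *
          Real.exp (-(g / 8) * s ^ 2)) := by
        rw [ENNReal.tsum_eq_iSup_sum]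
        refine iSup_le fun fs => ?_
        have hnn : ∀ r ∈ fs, 0 ≤ κ ^ r / r.factorial *
            (Real.exp (-(g/4) * s^2) * bellSeq b r) := by
          intro r _
          have := bellSeq_nonneg b hb0 r
          positivity
        rw [← ENNReal.ofReal_sum_of_nonneg hnn]
        apply ENNReal.ofReal_le_ofReal
        have hsub : fs ⊆ Finset.range ((fs.sup id) + 1) := Finset.subset_range_sup_succ fs
        calc (∑ r ∈ fs, κ ^ r / r.factorial * (Real.exp (-(g/4) * s^2) * bellSeq b r))
            ≤ ∑ r ∈ Finset.range ((fs.sup id) + 1),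
              κ ^ r / r.factorial * (Real.exp (-(g/4) * s^2) * bellSeq b r) := by
              refine Finset.sum_le_sum_of_subset_of_nonneg hsub fun r _ _ => ?_
              have := bellSeq_nonneg b hb0 r
              positivity
          _ ≤ _ := hfinal _
end
end

section
/- For every n ≥ 1, every ν ∈ ℝ, every κ > 0 and every v ∈ ℝⁿ, the Taylor seminorm of the function F(w) = exp(−(ν/2)·|w|²) (with |w| the Euclidean norm on ℝⁿ) satisfies ‖F‖_{κ,T(v)} ≤ exp( 2n|ν|κ² + (−ν + (3/4)|ν|)·|v|² ). In particular the defining series of the seminorm converges. -/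
open scoped ENNReal

open Finset

namespace QuadStab

variable {n : ℕ} (ν : ℝ)

noncomputable def Lmap (n : ℕ) (ν : ℝ) : (Fin n → ℝ) →L[ℝ] (Fin n → ℝ) →L[ℝ] ℝ :=
  (-ν) • ∑ i : Fin n,
    (ContinuousLinearMap.proj (R := ℝ) (φ := fun _ : Fin n => ℝ) i).smulRight
      (ContinuousLinearMap.proj (R := ℝ) (φ := fun _ : Fin n => ℝ) i)

lemma Lmap_apply (w u : Fin n → ℝ) : Lmap n ν w u = -ν * ∑ i, w i * u i := by
  simp [Lmap, ContinuousLinearMap.sum_apply, mul_comm, Finset.mul_sum]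

lemma Lmap_fst (w : Fin n → ℝ) :
    Lmap n ν w = (-ν) • ∑ i : Fin n, (w i) •
      (ContinuousLinearMap.proj (R := ℝ) (φ := fun _ : Fin n => ℝ) i) := by
  ext u
  simp [Lmap_apply, ContinuousLinearMap.sum_apply, Finset.mul_sum]

lemma norm_proj_le (i : Fin n) :
    ‖(ContinuousLinearMap.proj (R := ℝ) (φ := fun _ : Fin n => ℝ) i)‖ ≤ 1 :=
  ContinuousLinearMap.opNorm_le_bound _ zero_le_one fun w => by
    simpa using norm_le_pi_norm w i

lemma norm_Lmap_apply_le (w : Fin n → ℝ) : ‖Lmap n ν w‖ ≤ |ν| * ∑ i, |w i| := by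
  rw [Lmap_fst]
  rw [norm_smul (-ν) (∑ i : Fin n, w i •
    ContinuousLinearMap.proj (R := ℝ) (φ := fun _ : Fin n => ℝ) i)]
  simp only [norm_neg, Real.norm_eq_abs]
  gcongr
  refine (norm_sum_le _ _).trans ?_
  refine Finset.sum_le_sum fun i _ => ?_
  rw [norm_smul (w i) (ContinuousLinearMap.proj (R := ℝ) (φ := fun _ : Fin n => ℝ) i),
    Real.norm_eq_abs]
  calc |w i| * ‖(ContinuousLinearMap.proj (R := ℝ) (φ := fun _ : Fin n => ℝ) i)‖
      ≤ |w i| * 1 := mul_le_mul_of_nonneg_left (norm_proj_le i) (abs_nonneg _)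
    _ = |w i| := mul_one _

lemma norm_Lmap_le : ‖Lmap n ν‖ ≤ |ν| * n := by
  refine ContinuousLinearMap.opNorm_le_bound _ (by positivity) fun w => ?_
  refine (norm_Lmap_apply_le ν w).trans ?_
  rw [mul_assoc]
  gcongr
  calc ∑ i, |w i| ≤ ∑ _i : Fin n, ‖w‖ :=
        Finset.sum_le_sum fun i _ => by simpa using norm_le_pi_norm w i
    _ = n * ‖w‖ := by simp [mul_comm]

noncomputable def Fg (n : ℕ) (ν : ℝ) : (Fin n → ℝ) → ℝ :=
  fun w => Real.exp (-(ν / 2) * ∑ i, (w i) ^ 2)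

lemma Fg_pos (w : Fin n → ℝ) : 0 < Fg n ν w := Real.exp_pos _

lemma hasFDerivAt_Fg (w : Fin n → ℝ) :
    HasFDerivAt (Fg n ν) (Fg n ν w • Lmap n ν w) w := by
  have hsum : HasFDerivAt (fun w : Fin n → ℝ => ∑ i, (w i) ^ 2)
      (∑ i : Fin n, (2 * w i) •
        (ContinuousLinearMap.proj (R := ℝ) (φ := fun _ : Fin n => ℝ) i)) w := by
    refine HasFDerivAt.fun_sum fun i _ => ?_
    have hp : HasFDerivAt (fun w : Fin n → ℝ => w i)
        (ContinuousLinearMap.proj (R := ℝ) (φ := fun _ : Fin n => ℝ) i) w :=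
      (ContinuousLinearMap.proj (R := ℝ) (φ := fun _ : Fin n => ℝ) i).hasFDerivAt
    have := hp.fun_mul hp
    simpa [pow_two, two_mul, add_smul] using this
  have h1 : HasFDerivAt (fun w : Fin n → ℝ => -(ν / 2) * ∑ i, (w i) ^ 2)
      (Lmap n ν w) w := by
    have h := hsum.const_mul (-(ν / 2))
    have heq : Lmap n ν w = (-(ν / 2)) • ∑ i : Fin n, (2 * w i) •
        (ContinuousLinearMap.proj (R := ℝ) (φ := fun _ : Fin n => ℝ) i) := by
      ext u
      rw [Lmap_apply]
      simp only [ContinuousLinearMap.smul_apply, ContinuousLinearMap.sum_apply,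
        ContinuousLinearMap.proj_apply, smul_eq_mul]
      rw [Finset.mul_sum, Finset.mul_sum]
      exact Finset.sum_congr rfl fun i _ => by ring
    rw [heq]
    exact h
  exact h1.exp

lemma fderiv_Fg : fderiv ℝ (Fg n ν) = fun w => Fg n ν w • Lmap n ν w :=
  funext fun w => (hasFDerivAt_Fg ν w).fderiv

lemma contDiff_Fg : ContDiff ℝ (⊤ : ℕ∞) (Fg n ν) := by
  have h1 : ContDiff ℝ (⊤ : ℕ∞) (fun w : Fin n → ℝ => -(ν / 2) * ∑ i, (w i) ^ 2) := by
    refine ContDiff.mul contDiff_const ?_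
    refine ContDiff.sum fun i _ => ?_
    exact ((ContinuousLinearMap.proj (R := ℝ) (φ := fun _ : Fin n => ℝ) i).contDiff).pow 2
  exact Real.contDiff_exp.comp h1

lemma iteratedFDeriv_Lmap_eq_zero (m : ℕ) (hm : 2 ≤ m) (x : Fin n → ℝ) :
    iteratedFDeriv ℝ m (⇑(Lmap n ν)) x = 0 := by
  obtain ⟨k, rfl⟩ : ∃ k, m = k + 2 := ⟨m - 2, by omega⟩
  have h1 : ∀ y : Fin n → ℝ, ‖iteratedFDeriv ℝ (k + 2) (⇑(Lmap n ν)) y‖ = 0 := by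
    intro y
    rw [← norm_iteratedFDeriv_fderiv]
    have : fderiv ℝ (⇑(Lmap n ν)) = fun _ => Lmap n ν := funext fun z => (Lmap n ν).fderiv
    rw [this, iteratedFDeriv_const_of_ne (by omega)]
    simp
  exact norm_eq_zero.mp (h1 x)

noncomputable def cc (r p : ℕ) : ℝ :=
  if 2*p ≤ r then (r.factorial : ℝ) / ((r - 2*p).factorial * p.factorial * 2^p) else 0

lemma cc_nonneg (r p : ℕ) : 0 ≤ cc r p := by
  unfold cc; split
  · positivity
  · exact le_refl 0

lemma cc_zero (r : ℕ) : cc r 0 = 1 := by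
  unfold cc
  rw [if_pos (by omega)]
  simp [Nat.factorial_ne_zero]

lemma cc_key (A B : ℝ) (r p : ℕ) :
    cc (r+2) (p+1) * A^(r-2*p) * B^(p+1)
      = A * (cc (r+1) (p+1) * A^(r+1-2*(p+1)) * B^(p+1))
        + ((r:ℝ)+1) * B * (cc r p * A^(r-2*p) * B^p) := by
  have hfac : ∀ m : ℕ, ((m.factorial : ℝ)) ≠ 0 :=
    fun m => Nat.cast_ne_zero.mpr (Nat.factorial_ne_zero m)
  have h2p : (2:ℝ)^p ≠ 0 := by positivity
  rcases lt_trichotomy (2*p) r with h | h | h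
  · -- main case : 2*p + 1 ≤ r
    obtain ⟨s, rfl⟩ : ∃ s, r = 2*p+1+s := ⟨r - (2*p+1), by omega⟩
    unfold cc
    rw [if_pos (by omega), if_pos (by omega), if_pos (by omega)]
    have e1 : 2*p+1+s+2 - 2*(p+1) = s+1 := by omega
    have e2 : 2*p+1+s+1 - 2*(p+1) = s := by omega
    have e3 : 2*p+1+s - 2*p = s+1 := by omega
    rw [e1, e2, e3]
    have g1 : (2*p+1+s+2).factorial = (2*p+1+s+2) * ((2*p+1+s+1) * (2*p+1+s).factorial) := by
      rw [show 2*p+1+s+2 = (2*p+1+s+1)+1 from rfl, Nat.factorial_succ, Nat.factorial_succ]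
    have g2 : (2*p+1+s+1).factorial = (2*p+1+s+1) * (2*p+1+s).factorial := by
      rw [show 2*p+1+s+1 = (2*p+1+s)+1 from rfl, Nat.factorial_succ]
    have g3 : (s+1).factorial = (s+1) * s.factorial := Nat.factorial_succ s
    have g4 : (p+1).factorial = (p+1) * p.factorial := Nat.factorial_succ p
    rw [g1, g2, g3, g4]
    push_cast
    field_simp
    ring
  · -- case 2*p = r
    obtain rfl : r = 2*p := h.symm
    unfold cc
    rw [if_pos (by omega), if_neg (by omega), if_pos (by omega)]
    have e1 : 2*p+2 - 2*(p+1) = 0 := by omega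
    have e2 : 2*p - 2*p = 0 := by omega
    rw [e1, e2]
    have g1 : (2*p+2).factorial = (2*p+2) * ((2*p+1) * (2*p).factorial) := by
      rw [show 2*p+2 = (2*p+1)+1 from rfl, Nat.factorial_succ, Nat.factorial_succ]
    have g4 : (p+1).factorial = (p+1) * p.factorial := Nat.factorial_succ p
    rw [g1, g4]
    push_cast
    field_simp
    ring
  · -- case 2*p > r : everything vanishes
    unfold cc
    rw [if_neg (by omega), if_neg (by omega), if_neg (by omega)]
    ring

noncomputable def Q (A B : ℝ) (r : ℕ) : ℝ :=
  ∑ p ∈ Finset.range (r+1), cc r p * A^(r-2*p) * B^p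

lemma Q_nonneg {A B : ℝ} (hA : 0 ≤ A) (hB : 0 ≤ B) (r : ℕ) : 0 ≤ Q A B r :=
  Finset.sum_nonneg fun p _ => by
    have := cc_nonneg r p; positivity

lemma Q_zero (A B : ℝ) : Q A B 0 = 1 := by
  simp [Q, cc_zero]

lemma Q_one (A B : ℝ) : Q A B 1 = A := by
  have h1 : cc 1 1 = 0 := by unfold cc; rw [if_neg (by omega)]
  simp [Q, Finset.sum_range_succ, cc_zero, h1]

lemma Q_rec (A B : ℝ) (r : ℕ) :
    Q A B (r+2) = A * Q A B (r+1) + ((r:ℝ)+1) * B * Q A B r := by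
  have htop : cc (r+2) (r+2) * A^(r+2-2*(r+2)) * B^(r+2) = 0 := by
    unfold cc; rw [if_neg (by omega)]; ring
  have hL : Q A B (r+2)
      = (∑ p ∈ Finset.range (r+1), cc (r+2) (p+1) * A^(r+2-2*(p+1)) * B^(p+1))
        + cc (r+2) 0 * A^(r+2-2*0) * B^0 := by
    unfold Q
    rw [Finset.sum_range_succ' _ (r+2), Finset.sum_range_succ]
    rw [htop, add_zero]
  have hM : Q A B (r+1)
      = (∑ p ∈ Finset.range (r+1), cc (r+1) (p+1) * A^(r+1-2*(p+1)) * B^(p+1))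
        + cc (r+1) 0 * A^(r+1-2*0) * B^0 := by
    unfold Q
    rw [Finset.sum_range_succ' _ (r+1)]
  have hexp : ∀ p, r+2-2*(p+1) = r - 2*p := fun p => by omega
  rw [hL, hM, mul_add, Finset.mul_sum]
  have hQr : ((r:ℝ)+1) * B * Q A B r
      = ∑ p ∈ Finset.range (r+1), ((r:ℝ)+1) * B * (cc r p * A^(r-2*p) * B^p) := by
    unfold Q; rw [Finset.mul_sum]
  rw [hQr]
  have hterm : ∀ p ∈ Finset.range (r+1),
      cc (r+2) (p+1) * A^(r+2-2*(p+1)) * B^(p+1)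
        = A * (cc (r+1) (p+1) * A^(r+1-2*(p+1)) * B^(p+1))
          + ((r:ℝ)+1) * B * (cc r p * A^(r-2*p) * B^p) := fun p _ => by
    rw [hexp p]; exact cc_key A B r p
  rw [Finset.sum_congr rfl hterm, Finset.sum_add_distrib]
  have hc : cc (r+2) 0 * A^(r+2-2*0) * B^0 = A * (cc (r+1) 0 * A^(r+1-2*0) * B^0) := by
    simp only [cc_zero, Nat.mul_zero, Nat.sub_zero, pow_zero, one_mul, mul_one]
    rw [show r+2 = (r+1)+1 from rfl, pow_succ]
    ring
  rw [hc]
  ring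

lemma norm_itD1_Lmap (v : Fin n → ℝ) : ‖iteratedFDeriv ℝ 1 (⇑(Lmap n ν)) v‖ ≤ |ν| * n := by
  rw [← norm_iteratedFDeriv_fderiv, norm_iteratedFDeriv_zero, (Lmap n ν).fderiv]
  exact norm_Lmap_le ν

lemma norm_itD_Fg_zero (v : Fin n → ℝ) : ‖iteratedFDeriv ℝ 0 (Fg n ν) v‖ = Fg n ν v := by
  rw [norm_iteratedFDeriv_zero, Real.norm_eq_abs, abs_of_pos (Fg_pos ν v)]

lemma norm_itD_Fg_one (v : Fin n → ℝ) :
    ‖iteratedFDeriv ℝ 1 (Fg n ν) v‖ ≤ Fg n ν v * (|ν| * ∑ i, |v i|) := by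
  rw [← norm_iteratedFDeriv_fderiv, norm_iteratedFDeriv_zero, fderiv_Fg]
  rw [norm_smul (Fg n ν v) (Lmap n ν v), Real.norm_eq_abs, abs_of_pos (Fg_pos ν v)]
  exact mul_le_mul_of_nonneg_left (norm_Lmap_apply_le ν v) (Fg_pos ν v).le

lemma norm_itD_Fg_rec (v : Fin n → ℝ) (r : ℕ) :
    ‖iteratedFDeriv ℝ (r+2) (Fg n ν) v‖ ≤
      (|ν| * ∑ i, |v i|) * ‖iteratedFDeriv ℝ (r+1) (Fg n ν) v‖
      + ((r:ℝ)+1) * (|ν| * n) * ‖iteratedFDeriv ℝ r (Fg n ν) v‖ := by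
  rw [← norm_iteratedFDeriv_fderiv, fderiv_Fg]
  have hF : ContDiff ℝ (⊤ : ℕ∞) (Fg n ν) := contDiff_Fg ν
  have hLc : ContDiff ℝ (⊤ : ℕ∞) (⇑(Lmap n ν)) := (Lmap n ν).contDiff
  have hle := norm_iteratedFDeriv_smul_le (𝕜 := ℝ) hF hLc v (n := r+1)
    (by exact_mod_cast le_top)
  refine hle.trans ?_
  rw [Finset.sum_range_succ, Finset.sum_range_succ]
  have hzero : ∀ i ∈ Finset.range r,
      ((r+1).choose i : ℝ) * ‖iteratedFDeriv ℝ i (Fg n ν) v‖ *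
        ‖iteratedFDeriv ℝ (r+1-i) (⇑(Lmap n ν)) v‖ = 0 := by
    intro i hi
    have hi' : i < r := Finset.mem_range.mp hi
    rw [iteratedFDeriv_Lmap_eq_zero ν (r+1-i) (by omega) v]
    simp
  rw [Finset.sum_eq_zero hzero, zero_add]
  have h1 : r+1-r = 1 := by omega
  have h0 : r+1-(r+1) = 0 := by omega
  rw [h1, h0, Nat.choose_succ_self_right, Nat.choose_self]
  have t1 : ((r+1 : ℕ) : ℝ) * ‖iteratedFDeriv ℝ r (Fg n ν) v‖ *
      ‖iteratedFDeriv ℝ 1 (⇑(Lmap n ν)) v‖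
      ≤ ((r:ℝ)+1) * (|ν| * n) * ‖iteratedFDeriv ℝ r (Fg n ν) v‖ := by
    push_cast
    calc ((r:ℝ)+1) * ‖iteratedFDeriv ℝ r (Fg n ν) v‖ * ‖iteratedFDeriv ℝ 1 (⇑(Lmap n ν)) v‖
        ≤ ((r:ℝ)+1) * ‖iteratedFDeriv ℝ r (Fg n ν) v‖ * (|ν| * n) := by
          refine mul_le_mul_of_nonneg_left (norm_itD1_Lmap ν v) ?_
          positivity
      _ = ((r:ℝ)+1) * (|ν| * n) * ‖iteratedFDeriv ℝ r (Fg n ν) v‖ := by ring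
  have t2 : (1 : ℝ) * ‖iteratedFDeriv ℝ (r+1) (Fg n ν) v‖ *
      ‖iteratedFDeriv ℝ 0 (⇑(Lmap n ν)) v‖
      ≤ (|ν| * ∑ i, |v i|) * ‖iteratedFDeriv ℝ (r+1) (Fg n ν) v‖ := by
    rw [one_mul, norm_iteratedFDeriv_zero]
    calc ‖iteratedFDeriv ℝ (r+1) (Fg n ν) v‖ * ‖Lmap n ν v‖
        ≤ ‖iteratedFDeriv ℝ (r+1) (Fg n ν) v‖ * (|ν| * ∑ i, |v i|) := by
          refine mul_le_mul_of_nonneg_left (norm_Lmap_apply_le ν v) (norm_nonneg _)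
      _ = (|ν| * ∑ i, |v i|) * ‖iteratedFDeriv ℝ (r+1) (Fg n ν) v‖ := by ring
  push_cast at t1 t2 ⊢
  linarith

lemma norm_itD_Fg_le (v : Fin n → ℝ) (r : ℕ) :
    ‖iteratedFDeriv ℝ r (Fg n ν) v‖
      ≤ Fg n ν v * Q (|ν| * ∑ i, |v i|) (|ν| * n) r := by
  have hA : (0:ℝ) ≤ |ν| * ∑ i, |v i| := by positivity
  have hB : (0:ℝ) ≤ |ν| * n := by positivity
  induction r using Nat.twoStepInduction with
  | zero => rw [norm_itD_Fg_zero, Q_zero, mul_one]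
  | one => rw [Q_one]; exact norm_itD_Fg_one ν v
  | more r ih1 ih2 =>
    calc ‖iteratedFDeriv ℝ (r+2) (Fg n ν) v‖
        ≤ (|ν| * ∑ i, |v i|) * ‖iteratedFDeriv ℝ (r+1) (Fg n ν) v‖
          + ((r:ℝ)+1) * (|ν| * n) * ‖iteratedFDeriv ℝ r (Fg n ν) v‖ :=
          norm_itD_Fg_rec ν v r
      _ ≤ (|ν| * ∑ i, |v i|) * (Fg n ν v * Q (|ν| * ∑ i, |v i|) (|ν| * n) (r+1))
          + ((r:ℝ)+1) * (|ν| * n) * (Fg n ν v * Q (|ν| * ∑ i, |v i|) (|ν| * n) r) := by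
          have c1 : (0:ℝ) ≤ ((r:ℝ)+1) * (|ν| * n) := by positivity
          have := mul_le_mul_of_nonneg_left ih2 hA
          have := mul_le_mul_of_nonneg_left ih1 c1
          linarith
      _ = Fg n ν v * (Q (|ν| * ∑ i, |v i|) (|ν| * n) (r+2)) := by
          rw [Q_rec]; ring

lemma tsum_ofReal_exp {x : ℝ} (hx : 0 ≤ x) :
    ∑' s : ℕ, ENNReal.ofReal (x^s / s.factorial) = ENNReal.ofReal (Real.exp x) := by
  rw [Real.exp_eq_exp_ℝ, NormedSpace.exp_eq_tsum_div]
  exact (ENNReal.ofReal_tsum_of_nonneg (fun s => by positivity)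
    (Real.summable_pow_div_factorial x)).symm

lemma tsum_Q_eq (A B κ : ℝ) (hA : 0 ≤ A) (hB : 0 ≤ B) (hκ : 0 ≤ κ) :
    ∑' r : ℕ, ENNReal.ofReal (κ^r / r.factorial * Q A B r)
      = ENNReal.ofReal (Real.exp (A*κ)) * ENNReal.ofReal (Real.exp (B*κ^2/2)) := by
  set T : ℕ → ℕ → ℝ≥0∞ := fun s p =>
    ENNReal.ofReal ((A*κ)^s / s.factorial) * ENNReal.ofReal ((B*κ^2/2)^p / p.factorial) with hT
  set h : ℕ × ℕ → ℝ≥0∞ := fun q => if 2*q.2 ≤ q.1 then T (q.1 - 2*q.2) q.2 else 0 with hh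
  have step1 : ∀ r : ℕ, ENNReal.ofReal (κ^r / r.factorial * Q A B r)
      = ∑ p ∈ Finset.range (r+1), h (r, p) := by
    intro r
    have hQ : κ^r / r.factorial * Q A B r
        = ∑ p ∈ Finset.range (r+1), κ^r / r.factorial * (cc r p * A^(r-2*p) * B^p) := by
      unfold Q; rw [Finset.mul_sum]
    rw [hQ, ENNReal.ofReal_sum_of_nonneg (fun p _ => by
      have := cc_nonneg r p; positivity)]
    refine Finset.sum_congr rfl fun p _ => ?_
    by_cases hp : 2*p ≤ r
    · have hcc : cc r p = (r.factorial : ℝ) / ((r - 2*p).factorial * p.factorial * 2^p) := by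
        unfold cc; rw [if_pos hp]
      have hκr : κ^r = κ^(r-2*p) * (κ^2)^p := by
        rw [← pow_mul, ← pow_add]
        congr 1
        omega
      have : κ^r / r.factorial * (cc r p * A^(r-2*p) * B^p)
          = ((A*κ)^(r-2*p) / (r-2*p).factorial) * ((B*κ^2/2)^p / p.factorial) := by
        rw [hcc, hκr, mul_pow, div_pow, mul_pow]
        have hfr : ((r.factorial : ℝ)) ≠ 0 := Nat.cast_ne_zero.mpr (Nat.factorial_ne_zero r)
        have hf1 : (((r-2*p).factorial : ℝ)) ≠ 0 := Nat.cast_ne_zero.mpr (Nat.factorial_ne_zero _)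
        have hf2 : ((p.factorial : ℝ)) ≠ 0 := Nat.cast_ne_zero.mpr (Nat.factorial_ne_zero p)
        have h2 : ((2:ℝ))^p ≠ 0 := by positivity
        field_simp
      rw [this, hh]
      simp only [if_pos hp]
      rw [hT]
      rw [ENNReal.ofReal_mul (by positivity)]
    · have hcc : cc r p = 0 := by unfold cc; rw [if_neg hp]
      rw [hcc, hh]
      simp [if_neg hp]
  have step2 : ∀ r : ℕ, ∑ p ∈ Finset.range (r+1), h (r, p) = ∑' p : ℕ, h (r, p) := by
    intro r
    refine (tsum_eq_sum fun p hp => ?_).symm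
    have : ¬ 2*p ≤ r := by
      have := Finset.mem_range.not.mp hp
      omega
    simp [hh, this]
  calc ∑' r : ℕ, ENNReal.ofReal (κ^r / r.factorial * Q A B r)
      = ∑' r : ℕ, ∑' p : ℕ, h (r, p) := by
        refine tsum_congr fun r => ?_
        rw [step1 r, step2 r]
    _ = ∑' q : ℕ × ℕ, h q := by
        rw [ENNReal.tsum_prod']
    _ = ∑' q : ℕ × ℕ, h (q.1 + 2*q.2, q.2) := by
        refine (Function.Injective.tsum_eq (g := fun q : ℕ × ℕ => (q.1 + 2*q.2, q.2)) ?_ ?_).symm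
        · intro a b hab
          simp only [Prod.mk.injEq] at hab
          obtain ⟨h1, h2⟩ := hab
          ext <;> omega
        · intro q hq
          have hle : 2*q.2 ≤ q.1 := by
            by_contra hcon
            simp [hh, hcon] at hq
          exact ⟨(q.1 - 2*q.2, q.2), by set_option linter.unnecessarySeqFocus false in ext <;> simp <;> omega⟩
    _ = ∑' q : ℕ × ℕ, T q.1 q.2 := by
        refine tsum_congr fun q => ?_
        simp only [hh]
        rw [if_pos (by omega)]
        congr 1
        omega
    _ = (∑' s : ℕ, ENNReal.ofReal ((A*κ)^s / s.factorial)) *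
          (∑' p : ℕ, ENNReal.ofReal ((B*κ^2/2)^p / p.factorial)) := by
        rw [ENNReal.tsum_prod']
        simp only [hT]
        rw [← ENNReal.tsum_mul_right]
        exact tsum_congr fun s => ENNReal.tsum_mul_left
    _ = ENNReal.ofReal (Real.exp (A*κ)) * ENNReal.ofReal (Real.exp (B*κ^2/2)) := by
        rw [tsum_ofReal_exp (by positivity), tsum_ofReal_exp (by positivity)]

end QuadStab


open QuadStab in
/-- Quadratic stability: for every `n ≥ 1`, `ν ∈ ℝ`, `κ > 0` and `v ∈ ℝⁿ`, the Taylor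
seminorm of `w ↦ exp(-(ν/2)|w|²)` satisfies
`‖F‖_{κ,T(v)} ≤ exp(2n|ν|κ² + (-ν + (3/4)|ν|)|v|²)`;
in particular the defining series converges. -/
theorem quadratic_stability (n : ℕ) (hn : 1 ≤ n) (ν κ : ℝ) (hκ : 0 < κ) (v : Fin n → ℝ) :
    taylorSeminorm κ (fun w => Real.exp (-(ν / 2) * ∑ i, (w i) ^ 2)) v ≤
      ENNReal.ofReal
        (Real.exp (2 * n * |ν| * κ ^ 2 + (-ν + (3 / 4) * |ν|) * ∑ i, (v i) ^ 2)) := by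
  classical
  have hfun : (fun w : Fin n → ℝ => Real.exp (-(ν / 2) * ∑ i, (w i) ^ 2)) = Fg n ν := rfl
  rw [hfun]
  unfold taylorSeminorm
  set A := |ν| * ∑ i, |v i| with hAdef
  set B := |ν| * (n:ℝ) with hBdef
  have hA0 : 0 ≤ A := by positivity
  have hB0 : 0 ≤ B := by positivity
  have hFv : 0 < Fg n ν v := Fg_pos ν v
  have hV : (0:ℝ) ≤ ∑ i, (v i)^2 := Finset.sum_nonneg fun i _ => sq_nonneg _
  have hsup : ∀ r : ℕ, (⨆ u ∈ {u : Fin r → Fin n → ℝ | ∀ j, ‖u j‖ ≤ 1},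
      ENNReal.ofReal |iteratedFDeriv ℝ r (Fg n ν) v u|)
      ≤ ENNReal.ofReal (Fg n ν v * Q A B r) := by
    intro r
    refine iSup₂_le fun u hu => ?_
    refine ENNReal.ofReal_le_ofReal ?_
    have h1 : |iteratedFDeriv ℝ r (Fg n ν) v u|
        ≤ ‖iteratedFDeriv ℝ r (Fg n ν) v‖ * ∏ j, ‖u j‖ := by
      rw [← Real.norm_eq_abs]
      exact (iteratedFDeriv ℝ r (Fg n ν) v).le_opNorm u
    have h2 : ∏ j, ‖u j‖ ≤ 1 :=
      Finset.prod_le_one (fun j _ => norm_nonneg _) (fun j _ => hu j)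
    calc |iteratedFDeriv ℝ r (Fg n ν) v u|
        ≤ ‖iteratedFDeriv ℝ r (Fg n ν) v‖ * ∏ j, ‖u j‖ := h1
      _ ≤ ‖iteratedFDeriv ℝ r (Fg n ν) v‖ * 1 :=
          mul_le_mul_of_nonneg_left h2 (norm_nonneg _)
      _ = ‖iteratedFDeriv ℝ r (Fg n ν) v‖ := mul_one _
      _ ≤ Fg n ν v * Q A B r := norm_itD_Fg_le ν v r
  have hineq : -(ν/2) * (∑ i, (v i)^2) + (A * κ + B * κ^2/2)
      ≤ 2 * n * |ν| * κ^2 + (-ν + (3/4) * |ν|) * ∑ i, (v i)^2 := by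
    have hSle : κ * (∑ i, |v i|) ≤ (n:ℝ) * κ^2 + (∑ i, (v i)^2)/4 := by
      rw [Finset.mul_sum]
      calc ∑ i, κ * |v i| ≤ ∑ i, (κ^2 + (v i)^2/4) :=
            Finset.sum_le_sum fun i _ => by
              nlinarith [sq_nonneg (κ - |v i|/2), sq_abs (v i)]
        _ = (n:ℝ) * κ^2 + (∑ i, (v i)^2)/4 := by
            rw [Finset.sum_add_distrib, Finset.sum_const, Finset.card_univ,
              Fintype.card_fin, nsmul_eq_mul, ← Finset.sum_div]
    have H1 : |ν| * (κ * (∑ i, |v i|)) ≤ |ν| * ((n:ℝ) * κ^2 + (∑ i, (v i)^2)/4) :=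
      mul_le_mul_of_nonneg_left hSle (abs_nonneg ν)
    have H2 : 0 ≤ (|ν| - ν) * (∑ i, (v i)^2) :=
      mul_nonneg (sub_nonneg.mpr (le_abs_self ν)) hV
    have H3 : 0 ≤ (n:ℝ) * |ν| * κ^2 := by positivity
    rw [hAdef, hBdef]
    nlinarith [H1, H2, H3]
  calc (∑' r : ℕ, ENNReal.ofReal (κ ^ r / r.factorial) *
        ⨆ u ∈ {u : Fin r → Fin n → ℝ | ∀ j, ‖u j‖ ≤ 1},
          ENNReal.ofReal |iteratedFDeriv ℝ r (Fg n ν) v u|)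
      ≤ ∑' r : ℕ, ENNReal.ofReal (κ ^ r / r.factorial) *
          ENNReal.ofReal (Fg n ν v * Q A B r) :=
        ENNReal.tsum_le_tsum fun r => mul_le_mul_right (hsup r) _
    _ = ∑' r : ℕ, ENNReal.ofReal (Fg n ν v) *
          ENNReal.ofReal (κ ^ r / r.factorial * Q A B r) := by
        refine tsum_congr fun r => ?_
        rw [← ENNReal.ofReal_mul (by positivity),
          ← ENNReal.ofReal_mul hFv.le]
        congr 1
        ring
    _ = ENNReal.ofReal (Fg n ν v) *
          ∑' r : ℕ, ENNReal.ofReal (κ ^ r / r.factorial * Q A B r) :=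
        ENNReal.tsum_mul_left
    _ = ENNReal.ofReal (Fg n ν v) *
          (ENNReal.ofReal (Real.exp (A*κ)) * ENNReal.ofReal (Real.exp (B*κ^2/2))) := by
        rw [tsum_Q_eq A B κ hA0 hB0 hκ.le]
    _ = ENNReal.ofReal (Fg n ν v * (Real.exp (A*κ) * Real.exp (B*κ^2/2))) := by
        rw [← ENNReal.ofReal_mul (Real.exp_pos _).le, ← ENNReal.ofReal_mul hFv.le]
    _ ≤ ENNReal.ofReal
        (Real.exp (2 * n * |ν| * κ ^ 2 + (-ν + (3 / 4) * |ν|) * ∑ i, (v i) ^ 2)) := by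
        refine ENNReal.ofReal_le_ofReal ?_
        have hFg : Fg n ν v = Real.exp (-(ν / 2) * ∑ i, (v i) ^ 2) := rfl
        rw [hFg, ← Real.exp_add, ← Real.exp_add]
        refine Real.exp_le_exp.mpr ?_
        calc -(ν / 2) * ∑ i, (v i) ^ 2 + (A * κ + B * κ ^ 2 / 2)
            = -(ν/2) * (∑ i, (v i)^2) + (A * κ + B * κ^2/2) := by ring
          _ ≤ _ := hineq
end

section
/- For all n ≥ 1, all smooth functions F, G : ℝⁿ → ℝ, all κ > 0 and all v ∈ ℝⁿ, the Taylor seminorm is submultiplicative: ‖F·G‖_{κ,T(v)} ≤ ‖F‖_{κ,T(v)} · ‖G‖_{κ,T(v)} (an inequality in [0, +∞]). -/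
open scoped ENNReal

/-- The supremum of `|f u|` over the unit polydisc equals the operator norm. -/
lemma iSup_unitBall_eq_opNorm {n r : ℕ}
    (f : ContinuousMultilinearMap ℝ (fun _ : Fin r => (Fin n → ℝ)) ℝ) :
    (⨆ u ∈ {u : Fin r → Fin n → ℝ | ∀ j, ‖u j‖ ≤ 1}, ENNReal.ofReal |f u|)
      = ENNReal.ofReal ‖f‖ := by
  apply le_antisymm
  · refine iSup₂_le fun u hu => ENNReal.ofReal_le_ofReal ?_
    calc |f u| = ‖f u‖ := rfl
      _ ≤ ‖f‖ * ∏ i, ‖u i‖ := f.le_opNorm u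
      _ ≤ ‖f‖ * 1 := by
          gcongr
          · exact Finset.prod_le_one (fun i _ => norm_nonneg _) (fun i _ => hu i)
      _ = ‖f‖ := mul_one _
  · set T := ⨆ u ∈ {u : Fin r → Fin n → ℝ | ∀ j, ‖u j‖ ≤ 1}, ENNReal.ofReal |f u| with hT
    rcases eq_or_ne T ⊤ with h | h
    · simp [h]
    · have hC : ∀ u : Fin r → Fin n → ℝ, (∀ j, ‖u j‖ ≤ 1) → |f u| ≤ T.toReal := by
        intro u hu
        have h1 : ENNReal.ofReal |f u| ≤ T := le_iSup₂_of_le u hu le_rfl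
        have h2 := ENNReal.toReal_mono h h1
        rwa [ENNReal.toReal_ofReal (abs_nonneg _)] at h2
      have hT0 : 0 ≤ T.toReal := ENNReal.toReal_nonneg
      have hnorm : ‖f‖ ≤ T.toReal := by
        refine f.opNorm_le_bound hT0 fun m => ?_
        rcases em (∃ i, m i = 0) with ⟨i, hi⟩ | hm
        · have h0 : f m = 0 := f.map_coord_zero i hi
          rw [h0, norm_zero]
          exact mul_nonneg hT0 (Finset.prod_nonneg fun i _ => norm_nonneg _)
        · push_neg at hm
          set u : Fin r → Fin n → ℝ := fun i => ‖m i‖⁻¹ • m i with hu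
          have hnu : ∀ i, ‖u i‖ = 1 := fun i => by
            rw [hu, norm_smul, norm_inv, norm_norm,
              inv_mul_cancel₀ (norm_ne_zero_iff.mpr (hm i))]
          have hm' : m = fun i => ‖m i‖ • u i := by
            funext i
            rw [hu, smul_smul, mul_inv_cancel₀ (norm_ne_zero_iff.mpr (hm i)), one_smul]
          calc ‖f m‖ = ‖f (fun i => ‖m i‖ • u i)‖ := by rw [← hm']
            _ = ‖(∏ i, ‖m i‖) • f u‖ := by rw [f.map_smul_univ]
            _ = |∏ i, ‖m i‖| * |f u| := by rw [norm_smul]; rfl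
            _ = (∏ i, ‖m i‖) * |f u| := by
                rw [abs_of_nonneg (Finset.prod_nonneg fun i _ => norm_nonneg _)]
            _ ≤ (∏ i, ‖m i‖) * T.toReal := by
                gcongr
                · exact hC u fun j => le_of_eq (hnu j)
            _ = T.toReal * ∏ i, ‖m i‖ := mul_comm _ _
      calc ENNReal.ofReal ‖f‖ ≤ ENNReal.ofReal T.toReal := ENNReal.ofReal_le_ofReal hnorm
        _ = T := ENNReal.ofReal_toReal h

/-- Cauchy product formula in `ℝ≥0∞`. -/
lemma ennreal_cauchy (a b : ℕ → ℝ≥0∞) :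
    ∑' r : ℕ, ∑ i ∈ Finset.range (r + 1), a i * b (r - i) = (∑' i, a i) * ∑' i, b i := by
  have h1 : ((∑' i, a i) * ∑' i, b i) = ∑' p : ℕ × ℕ, a p.1 * b p.2 := by
    rw [← ENNReal.tsum_mul_right]
    simp_rw [← ENNReal.tsum_mul_left]
    exact ENNReal.tsum_prod.symm
  rw [h1, ← Finset.HasAntidiagonal.sigmaAntidiagonalEquivProd.tsum_eq (fun p : ℕ × ℕ => a p.1 * b p.2),
    ENNReal.tsum_sigma']
  congr 1
  funext r
  rw [tsum_fintype]
  simp only [Finset.HasAntidiagonal.sigmaAntidiagonalEquivProd, Equiv.coe_fn_mk]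
  rw [Finset.sum_coe_sort (Finset.HasAntidiagonal.antidiagonal r) (fun p : ℕ × ℕ => a p.1 * b p.2),
    Finset.Nat.sum_antidiagonal_eq_sum_range_succ (fun i j => a i * b j)]

lemma coeff_id (κ x y : ℝ) {i r : ℕ} (h : i ≤ r) :
    κ ^ r / r.factorial * ((r.choose i : ℝ) * x * y)
      = (κ ^ i / i.factorial * x) * (κ ^ (r - i) / (r - i).factorial * y) := by
  have h1 : (r.choose i : ℝ) = r.factorial / (i.factorial * (r - i).factorial) :=
    Nat.cast_choose ℝ h
  have h2 : κ ^ r = κ ^ i * κ ^ (r - i) := by rw [← pow_add, Nat.add_sub_cancel' h]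
  have f0 : (r.factorial : ℝ) ≠ 0 := Nat.cast_ne_zero.mpr r.factorial_ne_zero
  have f1 : (i.factorial : ℝ) ≠ 0 := Nat.cast_ne_zero.mpr i.factorial_ne_zero
  have f2 : ((r - i).factorial : ℝ) ≠ 0 := Nat.cast_ne_zero.mpr (r - i).factorial_ne_zero
  rw [h1, h2]
  field_simp

/-- Submultiplicativity of the Taylor seminorm: for smooth `F, G : ℝⁿ → ℝ`,
`‖F·G‖_{κ,T(v)} ≤ ‖F‖_{κ,T(v)} ‖G‖_{κ,T(v)}` (an inequality in `[0,∞]`). -/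
theorem taylorSeminorm_mul_le (n : ℕ) (hn : 1 ≤ n) (F G : (Fin n → ℝ) → ℝ)
    (hF : ContDiff ℝ (⊤ : ℕ∞) F) (hG : ContDiff ℝ (⊤ : ℕ∞) G)
    (κ : ℝ) (hκ : 0 < κ) (v : Fin n → ℝ) :
    taylorSeminorm κ (fun w => F w * G w) v ≤
      taylorSeminorm κ F v * taylorSeminorm κ G v := by
  have hrw : ∀ H : (Fin n → ℝ) → ℝ, taylorSeminorm κ H v =
      ∑' r : ℕ, ENNReal.ofReal (κ ^ r / r.factorial) *
        ENNReal.ofReal ‖iteratedFDeriv ℝ r H v‖ := by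
    intro H
    unfold taylorSeminorm
    congr 1
    funext r
    rw [iSup_unitBall_eq_opNorm]
  have hc : ∀ r : ℕ, (0 : ℝ) ≤ κ ^ r / r.factorial := fun r =>
    div_nonneg (pow_nonneg hκ.le r) (Nat.cast_nonneg _)
  rw [hrw, hrw, hrw]
  set a : ℕ → ℝ≥0∞ := fun i => ENNReal.ofReal (κ ^ i / i.factorial) *
    ENNReal.ofReal ‖iteratedFDeriv ℝ i F v‖ with ha
  set b : ℕ → ℝ≥0∞ := fun i => ENNReal.ofReal (κ ^ i / i.factorial) *
    ENNReal.ofReal ‖iteratedFDeriv ℝ i G v‖ with hb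
  rw [← ennreal_cauchy a b]
  refine ENNReal.tsum_le_tsum fun r => ?_
  have hleib : ‖iteratedFDeriv ℝ r (fun w => F w * G w) v‖ ≤
      ∑ i ∈ Finset.range (r + 1), (r.choose i : ℝ) * ‖iteratedFDeriv ℝ i F v‖ *
        ‖iteratedFDeriv ℝ (r - i) G v‖ :=
    norm_iteratedFDeriv_mul_le hF hG v (by exact_mod_cast le_top)
  calc ENNReal.ofReal (κ ^ r / r.factorial) *
        ENNReal.ofReal ‖iteratedFDeriv ℝ r (fun w => F w * G w) v‖
      ≤ ENNReal.ofReal (κ ^ r / r.factorial) *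
        ENNReal.ofReal (∑ i ∈ Finset.range (r + 1), (r.choose i : ℝ) *
          ‖iteratedFDeriv ℝ i F v‖ * ‖iteratedFDeriv ℝ (r - i) G v‖) := by
        exact mul_le_mul_right (ENNReal.ofReal_le_ofReal hleib) _
    _ = ∑ i ∈ Finset.range (r + 1), a i * b (r - i) := by
        rw [← ENNReal.ofReal_mul (hc r), Finset.mul_sum,
          ENNReal.ofReal_sum_of_nonneg (fun i _ => by positivity)]
        refine Finset.sum_congr rfl fun i hi => ?_
        have hi' : i ≤ r := Nat.lt_succ_iff.mp (Finset.mem_range.mp hi)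
        rw [coeff_id κ _ _ hi', ENNReal.ofReal_mul (by positivity),
          ENNReal.ofReal_mul (hc i), ENNReal.ofReal_mul (hc (r - i))]
end

section
/- Let E be a finite-dimensional real normed vector space, D ⊆ E a nonempty open set, κ > 0, and (T_k)_{k≥1} a sequence of smooth functions T_k : E → ℝ such that M := sup_k sup_{x∈D} ∑_{r=0}^∞ (κ^r/r!)·‖D^r T_k(x)‖ < ∞ (where ‖D^r T_k(x)‖ is the operator norm of the r-th Fréchet derivative as an r-linear map), and such that T_k(x) → 0 as k → ∞ for every fixed x ∈ D. Then for every compact subset D' ⊆ D and every r ∈ ℕ, sup_{x∈D'} ‖D^r T_k(x)‖ → 0 as k → ∞. -/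
open scoped ENNReal
open Metric

/-- Landau-type inequality: if `f` is differentiable with differentiable derivative,
`‖f‖ ≤ S` and `‖D²f‖ ≤ L` on `closedBall x h`, then `‖fderiv f x‖ ≤ 2S/h + L h`. -/
lemma landau_fderiv_bound {E F : Type*} [NormedAddCommGroup E] [NormedSpace ℝ E]
    [NormedAddCommGroup F] [NormedSpace ℝ F]
    (f : E → F) (hf : Differentiable ℝ f) (hf' : Differentiable ℝ (fderiv ℝ f))
    (x : E) (h L S : ℝ) (hh : 0 < h)
    (hS : ∀ y ∈ closedBall x h, ‖f y‖ ≤ S)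
    (hL : ∀ y ∈ closedBall x h, ‖fderiv ℝ (fderiv ℝ f) y‖ ≤ L) :
    ‖fderiv ℝ f x‖ ≤ 2 * S / h + L * h := by
  have hx : x ∈ closedBall x h := mem_closedBall_self hh.le
  have hS0 : 0 ≤ S := (norm_nonneg _).trans (hS x hx)
  have hL0 : 0 ≤ L := (norm_nonneg (fderiv ℝ (fderiv ℝ f) x)).trans (hL x hx)
  have hball : Convex ℝ (closedBall x h) := convex_closedBall x h
  have hlip : ∀ z ∈ closedBall x h, ‖fderiv ℝ f z - fderiv ℝ f x‖ ≤ L * h := by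
    intro z hz
    have := hball.norm_image_sub_le_of_norm_fderiv_le (fun y _ => hf' y)
        hL hx hz
    calc ‖fderiv ℝ f z - fderiv ℝ f x‖ ≤ L * ‖z - x‖ := this
      _ ≤ L * h := by
          have : ‖z - x‖ ≤ h := by
            rw [← dist_eq_norm]; exact mem_closedBall.1 hz
          nlinarith
  apply ContinuousLinearMap.opNorm_le_bound _ (by positivity)
  intro v
  rcases eq_or_ne v 0 with rfl | hv
  · simp
  · have hvn : (0:ℝ) < ‖v‖ := norm_pos_iff.2 hv
    set w : E := (h / ‖v‖) • v with hw_def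
    have hw : ‖w‖ = h := by
      rw [hw_def, norm_smul, Real.norm_eq_abs, abs_of_pos (by positivity)]
      field_simp
    have hxw : x + w ∈ closedBall x h := by
      rw [mem_closedBall, dist_eq_norm, add_sub_cancel_left, hw]
    have htay : ‖f (x + w) - f x - (fderiv ℝ f x) (x + w - x)‖ ≤ (L * h) * ‖x + w - x‖ := by
      exact hball.norm_image_sub_le_of_norm_fderiv_le'
        (fun y _ => hf y) hlip hx hxw
    rw [add_sub_cancel_left, hw] at htay
    have hAw : ‖(fderiv ℝ f x) w‖ ≤ 2 * S + L * h * h := by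
      have h1 : ‖(fderiv ℝ f x) w‖ ≤ ‖f (x + w) - f x - (fderiv ℝ f x) w‖ + ‖f (x + w)‖ + ‖f x‖ := by
        calc ‖(fderiv ℝ f x) w‖
            = ‖(f (x + w) - f x) - (f (x + w) - f x - (fderiv ℝ f x) w)‖ := by congr 1; abel
          _ ≤ ‖f (x + w) - f x‖ + ‖f (x + w) - f x - (fderiv ℝ f x) w‖ := norm_sub_le _ _
          _ ≤ (‖f (x + w)‖ + ‖f x‖) + ‖f (x + w) - f x - (fderiv ℝ f x) w‖ := by
              gcongr; exact norm_sub_le _ _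
          _ = ‖f (x + w) - f x - (fderiv ℝ f x) w‖ + ‖f (x + w)‖ + ‖f x‖ := by ring
      have h2 := hS (x + w) hxw
      have h3 := hS x hx
      nlinarith [htay]
    have hvw : v = (‖v‖ / h) • w := by
      rw [hw_def, smul_smul]
      field_simp
      rw [one_smul]
    calc ‖(fderiv ℝ f x) v‖ = ‖(fderiv ℝ f x) ((‖v‖ / h) • w)‖ := by rw [← hvw]
      _ = (‖v‖ / h) * ‖(fderiv ℝ f x) w‖ := by
          rw [map_smul, norm_smul, Real.norm_eq_abs, abs_of_pos (by positivity)]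
      _ ≤ (‖v‖ / h) * (2 * S + L * h * h) := by gcongr
      _ = (2 * S / h + L * h) * ‖v‖ := by field_simp


/-- Montel-type convergence of derivatives: if `(T_k)` is a sequence of smooth functions on a
finite-dimensional space whose Taylor seminorms `∑_r (κ^r/r!)‖D^r T_k(x)‖` are uniformly
bounded by `M` on an open set `D`, and `T_k → 0` pointwise on `D`, then for every compact
`D' ⊆ D` and every `r`, `sup_{x ∈ D'} ‖D^r T_k(x)‖ → 0` as `k → ∞`. -/
theorem derivatives_tendsto_zero_uniformly_on_compacts
    {E : Type*} [NormedAddCommGroup E] [NormedSpace ℝ E] [FiniteDimensional ℝ E]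
    (D : Set E) (hD : IsOpen D) (hDne : D.Nonempty)
    (κ : ℝ) (hκ : 0 < κ)
    (T : ℕ → E → ℝ) (hT : ∀ k, ContDiff ℝ (⊤ : ℕ∞) (T k))
    (M : ℝ)
    (hM : ∀ k, ∀ x ∈ D,
      ∑' r : ℕ, ENNReal.ofReal (κ ^ r / r.factorial * ‖iteratedFDeriv ℝ r (T k) x‖) ≤
        ENNReal.ofReal M)
    (hpt : ∀ x ∈ D, Filter.Tendsto (fun k => T k x) Filter.atTop (nhds 0))
    (D' : Set E) (hD'sub : D' ⊆ D) (hD'cpt : IsCompact D') (r : ℕ) :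
    Filter.Tendsto (fun k => ⨆ x ∈ D', ‖iteratedFDeriv ℝ r (T k) x‖)
      Filter.atTop (nhds 0) := by
  classical
  -- uniform bounds on all derivatives
  obtain ⟨B, hB0, hbound⟩ : ∃ B : ℕ → ℝ, (∀ n, 0 ≤ B n) ∧
      ∀ k n, ∀ x ∈ D, ‖iteratedFDeriv ℝ n (T k) x‖ ≤ B n := by
    refine ⟨fun n => max M 0 * n.factorial / κ ^ n, fun n => by positivity, ?_⟩
    intro k n x hx
    have h1 : ENNReal.ofReal (κ ^ n / n.factorial * ‖iteratedFDeriv ℝ n (T k) x‖)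
        ≤ ENNReal.ofReal (max M 0) :=
      le_trans (ENNReal.le_tsum n)
        ((hM k x hx).trans (ENNReal.ofReal_le_ofReal (le_max_left _ _)))
    have h2 : κ ^ n / n.factorial * ‖iteratedFDeriv ℝ n (T k) x‖ ≤ max M 0 :=
      (ENNReal.ofReal_le_ofReal_iff (le_max_right _ _)).1 h1
    have hq : (0:ℝ) < κ ^ n / n.factorial := by positivity
    have hfac : ((n.factorial : ℝ)) ≠ 0 := Nat.cast_ne_zero.2 n.factorial_ne_zero
    have hκ0 : κ ≠ 0 := ne_of_gt hκ
    have heq : max M 0 * n.factorial / κ ^ n = max M 0 / (κ ^ n / n.factorial) := by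
      field_simp
    show ‖iteratedFDeriv ℝ n (T k) x‖ ≤ max M 0 * n.factorial / κ ^ n
    rw [heq, le_div_iff₀ hq]
    linarith [h2, mul_comm (‖iteratedFDeriv ℝ n (T k) x‖) (κ ^ n / (n.factorial : ℝ))]
  -- main claim: uniform convergence of each derivative on compacts
  have key : ∀ (n : ℕ) (K : Set E), IsCompact K → K ⊆ D → ∀ ε > 0,
      ∀ᶠ k in Filter.atTop, ∀ x ∈ K, ‖iteratedFDeriv ℝ n (T k) x‖ ≤ ε := by
    intro n
    induction n with
    | zero =>
      intro K hK hKD ε hε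
      obtain ⟨δ, hδpos, hδ⟩ := hK.exists_cthickening_subset_open hD hKD
      have hB1 := hB0 1
      set ρ : ℝ := min δ (ε / (2 * (B 1 + 1))) with hρdef
      have hρpos : 0 < ρ := lt_min hδpos (by positivity)
      obtain ⟨t, htK, htcover⟩ := hK.elim_nhds_subcover (fun y => Metric.ball y ρ)
        (fun y _ => Metric.ball_mem_nhds y hρpos)
      have hconv : ∀ᶠ k in Filter.atTop, ∀ y ∈ t, ‖T k y‖ ≤ ε / 2 := by
        rw [Filter.eventually_all_finset]
        intro y hy
        have hyD : y ∈ D := hKD (htK y hy)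
        exact ((NormedAddCommGroup.tendsto_nhds_zero.1 (hpt y hyD)) (ε/2)
          (by positivity)).mono fun k hk => hk.le
      filter_upwards [hconv] with k hk x hx
      rw [norm_iteratedFDeriv_zero]
      obtain ⟨y, hy, hxy⟩ : ∃ y ∈ t, x ∈ Metric.ball y ρ := by
        simpa using htcover hx
      have hyK : y ∈ K := htK y hy
      have hballD : Metric.closedBall y δ ⊆ D :=
        (Metric.closedBall_subset_cthickening hyK δ).trans hδ
      have hder : ∀ z ∈ Metric.closedBall y δ, ‖fderiv ℝ (T k) z‖ ≤ B 1 := by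
        intro z hz
        have hone : ‖fderiv ℝ (T k) z‖ = ‖iteratedFDeriv ℝ 1 (T k) z‖ := by
          rw [← norm_iteratedFDeriv_fderiv, norm_iteratedFDeriv_zero]
        rw [hone]
        exact hbound k 1 z (hballD hz)
      have hxball : x ∈ Metric.closedBall y δ :=
        Metric.mem_closedBall.2 ((Metric.mem_ball.1 hxy).le.trans (min_le_left _ _))
      have hlip : ‖T k x - T k y‖ ≤ B 1 * ‖x - y‖ :=
        (convex_closedBall y δ).norm_image_sub_le_of_norm_fderiv_le
          (fun z _ => ((hT k).differentiable (by simp)) z) hder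
          (Metric.mem_closedBall_self hδpos.le) hxball
      have hxy' : ‖x - y‖ ≤ ε / (2 * (B 1 + 1)) := by
        rw [← dist_eq_norm]
        exact (Metric.mem_ball.1 hxy).le.trans (min_le_right _ _)
      have h3 : B 1 * ‖x - y‖ ≤ (B 1 + 1) * (ε / (2 * (B 1 + 1))) :=
        mul_le_mul (by linarith) hxy' (norm_nonneg _) (by linarith)
      have h4 : (B 1 + 1) * (ε / (2 * (B 1 + 1))) = ε / 2 := by
        have : B 1 + 1 ≠ 0 := by linarith
        field_simp
      calc ‖T k x‖ = ‖(T k x - T k y) + T k y‖ := by congr 1; abel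
        _ ≤ ‖T k x - T k y‖ + ‖T k y‖ := norm_add_le _ _
        _ ≤ ε / 2 + ε / 2 := by
            have := hk y hy
            rw [h4] at h3
            linarith
        _ = ε := by ring
    | succ n IH =>
      intro K hK hKD ε hε
      obtain ⟨δ, hδpos, hδ⟩ := hK.exists_cthickening_subset_open hD hKD
      have hBn := hB0 (n+2)
      set h : ℝ := min δ (ε / (2 * (B (n+2) + 1))) with hhdef
      have hh : 0 < h := lt_min hδpos (by positivity)
      have hε' : 0 < ε * h / 4 := by positivity
      filter_upwards [IH (Metric.cthickening δ K) hK.cthickening hδ (ε * h / 4) hε']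
        with k hk x hx
      have hball : Metric.closedBall x h ⊆ Metric.cthickening δ K :=
        (Metric.closedBall_subset_closedBall (min_le_left _ _)).trans
          (Metric.closedBall_subset_cthickening hx δ)
      have hballD : Metric.closedBall x h ⊆ D := hball.trans hδ
      have hdf : Differentiable ℝ (iteratedFDeriv ℝ n (T k)) :=
        (hT k).differentiable_iteratedFDeriv (by exact_mod_cast WithTop.coe_lt_top (n : ℕ))
      have hdf' : Differentiable ℝ (fderiv ℝ (iteratedFDeriv ℝ n (T k))) := by
        exact (((hT k).iteratedFDeriv_right (m := 2) (i := n) (WithTop.coe_le_coe.2 le_top)).fderiv_right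
          (m := 1) le_rfl).differentiable one_ne_zero
      have hSb : ∀ y ∈ Metric.closedBall x h, ‖iteratedFDeriv ℝ n (T k) y‖ ≤ ε * h / 4 :=
        fun y hy => hk y (hball hy)
      have hmain := landau_fderiv_bound _ hdf hdf' x h (B (n+2)) (ε * h / 4) hh hSb
        (fun y hy => by
          rw [fderiv_iteratedFDeriv, LinearIsometryEquiv.comp_fderiv']
          rw [show ((continuousMultilinearCurryLeftEquiv ℝ (fun _ : Fin (n + 1) => E) ℝ) :
              _ →L[ℝ] _) = (continuousMultilinearCurryLeftEquiv ℝ (fun _ : Fin (n + 1) => E)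
              ℝ).toLinearIsometry.toContinuousLinearMap from rfl]
          rw [LinearIsometry.norm_toContinuousLinearMap_comp]
          rw [norm_fderiv_iteratedFDeriv]
          exact hbound k (n+2) y (hballD hy))
      rw [← norm_fderiv_iteratedFDeriv]
      refine hmain.trans ?_
      have hne : h ≠ 0 := ne_of_gt hh
      have e1 : 2 * (ε * h / 4) / h = ε / 2 := by field_simp; ring
      have hhle : h ≤ ε / (2 * (B (n+2) + 1)) := min_le_right _ _
      have h3 : B (n+2) * h ≤ (B (n+2) + 1) * (ε / (2 * (B (n+2) + 1))) :=
        mul_le_mul (by linarith) hhle hh.le (by linarith)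
      have h4 : (B (n+2) + 1) * (ε / (2 * (B (n+2) + 1))) = ε / 2 := by
        have : B (n+2) + 1 ≠ 0 := by linarith
        field_simp
      rw [e1]
      rw [h4] at h3
      linarith
  -- conclude
  rw [NormedAddCommGroup.tendsto_nhds_zero]
  intro ε hε
  filter_upwards [key r D' hD'cpt hD'sub (ε/2) (by positivity)] with k hk
  have hnn : 0 ≤ ⨆ x ∈ D', ‖iteratedFDeriv ℝ r (T k) x‖ :=
    Real.iSup_nonneg fun x => Real.iSup_nonneg fun _ => norm_nonneg _
  have hub : (⨆ x ∈ D', ‖iteratedFDeriv ℝ r (T k) x‖) ≤ ε/2 :=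
    Real.iSup_le (fun x => Real.iSup_le (fun hx => hk x hx) (by positivity)) (by positivity)
  rw [Real.norm_eq_abs, abs_of_nonneg hnn]
  linarith
end

section
/- Let β be a finite set equipped with a finite simple graph structure, and let R be a commutative ring. For all functions I₁, I₂ : β → R and K : Finset β → R, and every X ⊆ β, one has (I₁ ∘ K)(X) = (I₂ ∘ K')(X), where K' : Finset β → R is defined by K'(W) := ((I₁ − I₂) ∘ K)(W) = ∑_{Y⊆W} (I₁ − I₂)^{W∖Y} · K^{[Y]}; that is, ∑_{Y⊆X} I₁^{X∖Y}·K^{[Y]} = ∑_{W⊆X} I₂^{X∖W} · ∏_{W'∈Comp(W)} K'(W'). -/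
/-- The graph `G` restricted to a finite set `X` of vertices: edges of `G` with both
endpoints in `X` (viewed as a graph on all of `β`). -/
def restrictGraph {β : Type*} (G : SimpleGraph β) (X : Finset β) : SimpleGraph β where
  Adj a b := a ∈ X ∧ b ∈ X ∧ G.Adj a b
  symm := ⟨fun a b h => ⟨h.2.1, h.1, h.2.2.symm⟩⟩
  loopless := ⟨fun a h => G.irrefl h.2.2⟩

/-- The connected component of `x` inside the polymer `X`: all vertices of `X` reachable
from `x` within the subgraph induced on `X`. -/
noncomputable def compOf {β : Type*} (G : SimpleGraph β) (X : Finset β) (x : β) : Finset β :=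
  @Finset.filter β (fun y => (restrictGraph G X).Reachable x y) (Classical.decPred _) X

/-- `Comp(X)`: the set of connected components of the subgraph induced on `X`, each component
regarded as a `Finset β`. -/
noncomputable def comps {β : Type*} [DecidableEq β] (G : SimpleGraph β) (X : Finset β) :
    Finset (Finset β) :=
  X.image (fun x => compOf G X x)

/-- The component power `K^{[X]} = ∏_{P ∈ Comp(X)} K(P)`. -/
noncomputable def compPow {β : Type*} [DecidableEq β] {R : Type*} [CommRing R]
    (G : SimpleGraph β) (K : Finset β → R) (X : Finset β) : R :=
  ∏ P ∈ comps G X, K P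

/-- The polymer expansion `(I ∘ K)(X) = ∑_{Y ⊆ X} I^{X∖Y} K^{[Y]}`, where
`I^{X∖Y} = ∏_{b ∈ X∖Y} I(b)`. -/
noncomputable def polyConv {β : Type*} [DecidableEq β] {R : Type*} [CommRing R]
    (G : SimpleGraph β) (I : β → R) (K : Finset β → R) (X : Finset β) : R :=
  ∑ Y ∈ X.powerset, (∏ b ∈ X \ Y, I b) * compPow G K Y

section Aux

variable {β : Type*} (G : SimpleGraph β)

/-- `A` is closed in `S`: edges of `G` from `A` into `S` stay in `A`. -/
def IsClosedIn (S A : Finset β) : Prop :=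
  ∀ ⦃a b : β⦄, a ∈ A → b ∈ S → G.Adj a b → b ∈ A

lemma mem_compOf {S : Finset β} {x y : β} :
    y ∈ compOf G S x ↔ y ∈ S ∧ (restrictGraph G S).Reachable x y :=
  @Finset.mem_filter β (fun y => (restrictGraph G S).Reachable x y) (Classical.decPred _) S y

lemma compOf_subset {S : Finset β} {x : β} : compOf G S x ⊆ S :=
  @Finset.filter_subset β (fun y => (restrictGraph G S).Reachable x y) (Classical.decPred _) S

lemma mem_compOf_self {S : Finset β} {x : β} (hx : x ∈ S) : x ∈ compOf G S x :=
  (mem_compOf G).2 ⟨hx, SimpleGraph.Reachable.refl x⟩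

lemma walk_closed {S A : Finset β} (hcl : IsClosedIn G S A) {x y : β}
    (w : (restrictGraph G S).Walk x y) (hx : x ∈ A) :
    y ∈ A ∧ (restrictGraph G A).Reachable x y := by
  induction w with
  | nil => exact ⟨hx, SimpleGraph.Reachable.refl _⟩
  | @cons u v w h p ih =>
    obtain ⟨hu, hv, hadj⟩ := h
    have hvA : v ∈ A := hcl hx hv hadj
    obtain ⟨hy, hr⟩ := ih hvA
    have hadjA : (restrictGraph G A).Adj u v := ⟨hx, hvA, hadj⟩
    exact ⟨hy, hadjA.reachable.trans hr⟩

lemma reach_closed_iff {S A : Finset β} (hAS : A ⊆ S) (hcl : IsClosedIn G S A) {x y : β}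
    (hx : x ∈ A) :
    (restrictGraph G S).Reachable x y ↔ (restrictGraph G A).Reachable x y := by
  constructor
  · rintro ⟨w⟩; exact (walk_closed G hcl w hx).2
  · intro h
    have hle : restrictGraph G A ≤ restrictGraph G S := by
      intro a b hab
      exact ⟨hAS hab.1, hAS hab.2.1, hab.2.2⟩
    exact h.mono hle

lemma compOf_eq_of_closed {S A : Finset β} (hAS : A ⊆ S) (hcl : IsClosedIn G S A) {y : β}
    (hy : y ∈ A) : compOf G S y = compOf G A y := by
  ext z
  rw [mem_compOf, mem_compOf]
  constructor
  · rintro ⟨hzS, ⟨w⟩⟩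
    obtain ⟨hzA, hr⟩ := walk_closed G hcl w hy
    exact ⟨hzA, hr⟩
  · rintro ⟨hzA, hr⟩
    exact ⟨hAS hzA, (reach_closed_iff G hAS hcl hy).2 hr⟩

lemma compOf_closed {S : Finset β} {x : β} : IsClosedIn G S (compOf G S x) := by
  intro a b ha hb hadj
  rw [mem_compOf] at ha ⊢
  exact ⟨hb, ha.2.trans (SimpleGraph.Adj.reachable ⟨ha.1, hb, hadj⟩)⟩

lemma compOf_eq_of_reach {S : Finset β} {x y : β}
    (h : (restrictGraph G S).Reachable x y) : compOf G S x = compOf G S y := by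
  ext z
  rw [mem_compOf, mem_compOf]
  exact ⟨fun hz => ⟨hz.1, h.symm.trans hz.2⟩, fun hz => ⟨hz.1, h.trans hz.2⟩⟩

variable [DecidableEq β]

lemma subset_of_mem_comps {S P : Finset β} (h : P ∈ comps G S) : P ⊆ S := by
  rw [comps, Finset.mem_image] at h
  obtain ⟨x, _, rfl⟩ := h
  exact compOf_subset G

lemma nonempty_of_mem_comps {S P : Finset β} (h : P ∈ comps G S) : P.Nonempty := by
  rw [comps, Finset.mem_image] at h
  obtain ⟨x, hx, rfl⟩ := h
  exact ⟨x, mem_compOf_self G hx⟩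

lemma closed_left {A B : Finset β} (hd : Disjoint A B)
    (hcross : ∀ a ∈ A, ∀ b ∈ B, ¬ G.Adj a b) : IsClosedIn G (A ∪ B) A := by
  intro a b ha hb hadj
  rcases Finset.mem_union.1 hb with h | h
  · exact h
  · exact absurd hadj (hcross a ha b h)

lemma comps_union {A B : Finset β} (hd : Disjoint A B)
    (hcross : ∀ a ∈ A, ∀ b ∈ B, ¬ G.Adj a b) :
    comps G (A ∪ B) = comps G A ∪ comps G B := by
  have hclA : IsClosedIn G (A ∪ B) A := closed_left G hd hcross
  have hclB : IsClosedIn G (A ∪ B) B := by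
    have := closed_left G hd.symm (fun b hb a ha hadj => hcross a ha b hb hadj.symm)
    rwa [Finset.union_comm] at this
  rw [comps, Finset.image_union]
  congr 1
  · apply Finset.image_congr
    intro x hx
    exact compOf_eq_of_closed G Finset.subset_union_left hclA hx
  · apply Finset.image_congr
    intro x hx
    exact compOf_eq_of_closed G Finset.subset_union_right hclB hx

lemma comps_disjoint {A B : Finset β} (hd : Disjoint A B) :
    Disjoint (comps G A) (comps G B) := by
  rw [Finset.disjoint_left]
  intro P hPA hPB
  obtain ⟨z, hz⟩ := nonempty_of_mem_comps G hPA
  exact Finset.disjoint_left.1 hd (subset_of_mem_comps G hPA hz)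
    (subset_of_mem_comps G hPB hz)

variable {R : Type*} [CommRing R]

lemma compPow_union (K : Finset β → R) {A B : Finset β} (hd : Disjoint A B)
    (hcross : ∀ a ∈ A, ∀ b ∈ B, ¬ G.Adj a b) :
    compPow G K (A ∪ B) = compPow G K A * compPow G K B := by
  rw [compPow, comps_union G hd hcross, Finset.prod_union (comps_disjoint G hd)]
  rfl

lemma polyConv_union (J : β → R) (K : Finset β → R) {A B : Finset β} (hd : Disjoint A B)
    (hcross : ∀ a ∈ A, ∀ b ∈ B, ¬ G.Adj a b) :
    polyConv G J K (A ∪ B) = polyConv G J K A * polyConv G J K B := by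
  unfold polyConv
  rw [Finset.sum_mul_sum, ← Finset.sum_product']
  symm
  refine Finset.sum_nbij' (fun p => p.1 ∪ p.2) (fun Y => (Y ∩ A, Y ∩ B)) ?_ ?_ ?_ ?_ ?_
  · rintro ⟨Y₁, Y₂⟩ hp
    simp only [Finset.mem_product, Finset.mem_powerset] at hp
    exact Finset.mem_powerset.2 (Finset.union_subset_union hp.1 hp.2)
  · intro Y hY
    simp only [Finset.mem_product, Finset.mem_powerset]
    exact ⟨Finset.inter_subset_right, Finset.inter_subset_right⟩
  · rintro ⟨Y₁, Y₂⟩ hp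
    simp only [Finset.mem_product, Finset.mem_powerset] at hp
    have h1 : (Y₁ ∪ Y₂) ∩ A = Y₁ := by
      rw [Finset.union_inter_distrib_right, Finset.inter_eq_left.2 hp.1,
        Finset.disjoint_iff_inter_eq_empty.1 (Finset.disjoint_of_subset_left hp.2 hd.symm), Finset.union_empty]
    have h2 : (Y₁ ∪ Y₂) ∩ B = Y₂ := by
      rw [Finset.union_inter_distrib_right, Finset.inter_eq_left.2 hp.2,
        Finset.disjoint_iff_inter_eq_empty.1 (Finset.disjoint_of_subset_left hp.1 hd), Finset.empty_union]
    simp [h1, h2]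
  · intro Y hY
    rw [Finset.mem_powerset] at hY
    simp only []
    rw [← Finset.inter_union_distrib_left, Finset.inter_eq_left.2 hY]
  · rintro ⟨Y₁, Y₂⟩ hp
    simp only [Finset.mem_product, Finset.mem_powerset] at hp
    obtain ⟨h1, h2⟩ := hp
    have hdY : Disjoint Y₁ Y₂ :=
      Finset.disjoint_of_subset_left h1 (Finset.disjoint_of_subset_right h2 hd)
    have hsd : (A ∪ B) \ (Y₁ ∪ Y₂) = (A \ Y₁) ∪ (B \ Y₂) := by
      ext z
      simp only [Finset.mem_sdiff, Finset.mem_union, not_or]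
      constructor
      · rintro ⟨hz | hz, hn1, hn2⟩
        · exact Or.inl ⟨hz, hn1⟩
        · exact Or.inr ⟨hz, hn2⟩
      · rintro (⟨hz, hn⟩ | ⟨hz, hn⟩)
        · exact ⟨Or.inl hz, hn, fun h => Finset.disjoint_left.1 hd hz (h2 h)⟩
        · exact ⟨Or.inr hz, fun h => Finset.disjoint_left.1 hd (h1 h) hz, hn⟩
    have hdsd : Disjoint (A \ Y₁) (B \ Y₂) :=
      Finset.disjoint_of_subset_left (Finset.sdiff_subset)
        (Finset.disjoint_of_subset_right (Finset.sdiff_subset) hd)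
    have hcrossY : ∀ a ∈ Y₁, ∀ b ∈ Y₂, ¬ G.Adj a b :=
      fun a ha b hb => hcross a (h1 ha) b (h2 hb)
    simp only []
    rw [hsd, Finset.prod_union hdsd, compPow_union G K hdY hcrossY]
    ring

lemma polyConv_eq (I : β → R) (K : Finset β → R) (X : Finset β) :
    polyConv G I K X = ∑ Y ∈ X.powerset, (∏ b ∈ X \ Y, I b) * compPow G K Y :=
  rfl

lemma compPow_polyConv (J : β → R) (K : Finset β → R) (W : Finset β) :
    compPow G (fun P => polyConv G J K P) W = polyConv G J K W := by
  induction W using Finset.strongInduction with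
  | _ W ih =>
    rcases W.eq_empty_or_nonempty with rfl | ⟨x, hx⟩
    · simp [compPow, comps, polyConv]
    · set A := compOf G W x with hA
      have hAW : A ⊆ W := compOf_subset G
      have hxA : x ∈ A := mem_compOf_self G hx
      have hW : A ∪ (W \ A) = W := Finset.union_sdiff_of_subset hAW
      have hclA : IsClosedIn G W A := compOf_closed G
      have hd : Disjoint A (W \ A) := Finset.disjoint_sdiff
      have hcross : ∀ a ∈ A, ∀ b ∈ W \ A, ¬ G.Adj a b := by
        intro a ha b hb hadj
        exact (Finset.mem_sdiff.1 hb).2 (hclA ha (Finset.mem_sdiff.1 hb).1 hadj)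
      have hcompA : ∀ y ∈ A, compOf G A y = A := by
        intro y hy
        have h1 : compOf G W y = compOf G A y := compOf_eq_of_closed G hAW hclA hy
        have h2 : compOf G W x = compOf G W y :=
          compOf_eq_of_reach G ((mem_compOf G).1 hy).2
        rw [← h1, ← h2]
      have hcompsA : comps G A = {A} := by
        rw [comps, Finset.image_congr (fun y hy => hcompA y hy), Finset.image_const ⟨x, hxA⟩]
      have hssub : W \ A ⊂ W := Finset.sdiff_ssubset hAW ⟨x, hxA⟩
      calc compPow G (fun P => polyConv G J K P) W
          = compPow G (fun P => polyConv G J K P) (A ∪ (W \ A)) := by rw [hW]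
        _ = compPow G (fun P => polyConv G J K P) A *
              compPow G (fun P => polyConv G J K P) (W \ A) := compPow_union G _ hd hcross
        _ = polyConv G J K A * polyConv G J K (W \ A) := by
            rw [ih _ hssub, compPow, hcompsA, Finset.prod_singleton]
        _ = polyConv G J K (A ∪ (W \ A)) := (polyConv_union G J K hd hcross).symm
        _ = polyConv G J K W := by rw [hW]

end Aux

/-- The re-expansion identity `I₁ ∘ K = I₂ ∘ ((I₁ - I₂) ∘ K)` for polymer expansions:
`∑_{Y⊆X} I₁^{X∖Y} K^{[Y]} = ∑_{W⊆X} I₂^{X∖W} ∏_{W'∈Comp(W)} ((I₁-I₂) ∘ K)(W')`. -/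
theorem polyConv_change_of_I {β : Type*} [Fintype β] [DecidableEq β] (G : SimpleGraph β)
    {R : Type*} [CommRing R] (I₁ I₂ : β → R) (K : Finset β → R) (X : Finset β) :
    polyConv G I₁ K X =
      polyConv G I₂ (fun W => polyConv G (fun b => I₁ b - I₂ b) K W) X := by
  set J : β → R := fun b => I₁ b - I₂ b with hJdef
  symm
  calc polyConv G I₂ (fun W => polyConv G J K W) X
      = ∑ W ∈ X.powerset, (∏ b ∈ X \ W, I₂ b) * polyConv G J K W := by
        rw [polyConv_eq]
        exact Finset.sum_congr rfl fun W _ => by rw [compPow_polyConv]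
    _ = ∑ W ∈ X.powerset, ∑ Y ∈ W.powerset,
          (∏ b ∈ X \ W, I₂ b) * ((∏ b ∈ W \ Y, J b) * compPow G K Y) := by
        refine Finset.sum_congr rfl fun W _ => ?_
        rw [polyConv_eq, Finset.mul_sum]
    _ = ∑ Y ∈ X.powerset, ∑ S ∈ (X \ Y).powerset,
          (∏ b ∈ (X \ Y) \ S, I₂ b) * ((∏ b ∈ S, J b) * compPow G K Y) := by
        rw [Finset.sum_sigma', Finset.sum_sigma']
        refine Finset.sum_nbij' (fun p => ⟨p.2, p.1 \ p.2⟩) (fun q => ⟨q.1 ∪ q.2, q.1⟩)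
          ?_ ?_ ?_ ?_ ?_
        · rintro ⟨W, Y⟩ hp
          simp only [Finset.mem_sigma, Finset.mem_powerset] at hp ⊢
          exact ⟨hp.2.trans hp.1, Finset.sdiff_subset_sdiff hp.1 le_rfl⟩
        · rintro ⟨Y, S⟩ hq
          simp only [Finset.mem_sigma, Finset.mem_powerset] at hq ⊢
          exact ⟨Finset.union_subset hq.1 (hq.2.trans Finset.sdiff_subset),
            Finset.subset_union_left⟩
        · rintro ⟨W, Y⟩ hp
          simp only [Finset.mem_sigma, Finset.mem_powerset] at hp
          have : Y ∪ (W \ Y) = W := Finset.union_sdiff_of_subset hp.2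
          simp [this]
        · rintro ⟨Y, S⟩ hq
          simp only [Finset.mem_sigma, Finset.mem_powerset] at hq
          have hdis : Disjoint Y S :=
            Finset.disjoint_of_subset_right hq.2 Finset.sdiff_disjoint.symm
          have : (Y ∪ S) \ Y = S := Finset.union_sdiff_cancel_left hdis
          simp [this]
        · rintro ⟨W, Y⟩ hp
          simp only [Finset.mem_sigma, Finset.mem_powerset] at hp
          have hXW : X \ W = (X \ Y) \ (W \ Y) := by
            ext z
            simp only [Finset.mem_sdiff, not_and, not_not]
            constructor
            · intro ⟨hzX, hzW⟩
              exact ⟨⟨hzX, fun h => hzW (hp.2 h)⟩, fun h => absurd h hzW⟩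
            · intro ⟨⟨hzX, hzY⟩, h⟩
              exact ⟨hzX, fun hzW => hzY (h hzW)⟩
          rw [hXW]
    _ = ∑ Y ∈ X.powerset, (∏ b ∈ X \ Y, I₁ b) * compPow G K Y := by
        refine Finset.sum_congr rfl fun Y _ => ?_
        have step : ∀ S ∈ (X \ Y).powerset,
            (∏ b ∈ (X \ Y) \ S, I₂ b) * ((∏ b ∈ S, J b) * compPow G K Y) =
            ((∏ b ∈ S, J b) * ∏ b ∈ (X \ Y) \ S, I₂ b) * compPow G K Y :=
          fun S _ => by ring
        rw [Finset.sum_congr rfl step, ← Finset.sum_mul, ← Finset.prod_add]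
        congr 1
        exact Finset.prod_congr rfl fun b _ => by simp [hJdef]
    _ = polyConv G I₁ K X := rfl
end
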